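/- arXiv:2001.10955 — 6 statements merged into one kernel-verified Lean document; each statement's English description precedes it below -/
import Mathlib

section
/- Let T, p, r be positive integers, X a T×p real matrix, F a T×r real matrix satisfying FᵀF = T·I_r, Q a symmetric positive semidefinite p×p real matrix, and α ≥ 0. Then the matrix D = I_p + αQ is invertible, and the function f(B) = (pT)⁻¹‖X − FBᵀ‖_F² + (α/p)·tr(BᵀQB) over p×r real matrices B attains its minimum uniquely at B* = T⁻¹(I_p + αQ)⁻¹XᵀF; that is, f(B) ≥ f(B*) for every p×r matrix B, with equality if and only if B = B*. -/
open Matrix BigOperators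

/-- The penalized least-squares objective
`f(B) = (pT)⁻¹‖X − FBᵀ‖_F² + (α/p)·tr(BᵀQB)`. -/
noncomputable def penObj (T p r : ℕ) (X : Matrix (Fin T) (Fin p) ℝ)
    (F : Matrix (Fin T) (Fin r) ℝ) (Q : Matrix (Fin p) (Fin p) ℝ) (α : ℝ)
    (B : Matrix (Fin p) (Fin r) ℝ) : ℝ :=
  ((p : ℝ) * T)⁻¹ * Matrix.trace ((X - F * Bᵀ)ᵀ * (X - F * Bᵀ))
    + (α / p) * Matrix.trace (Bᵀ * Q * B)

/-- The closed-form minimizer `B* = T⁻¹(I_p + αQ)⁻¹XᵀF`. -/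
noncomputable def penMinimizer (T p r : ℕ) (X : Matrix (Fin T) (Fin p) ℝ)
    (F : Matrix (Fin T) (Fin r) ℝ) (Q : Matrix (Fin p) (Fin p) ℝ) (α : ℝ) :
    Matrix (Fin p) (Fin r) ℝ :=
  (T : ℝ)⁻¹ • (((1 : Matrix (Fin p) (Fin p) ℝ) + α • Q)⁻¹ * Xᵀ * F)

/-- Diagonal entries of `Eᵀ D E` as quadratic forms in the columns of `E`. -/
lemma quad_diag_entry {p r : ℕ} (D : Matrix (Fin p) (Fin p) ℝ)
    (E : Matrix (Fin p) (Fin r) ℝ) (j : Fin r) :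
    (Eᵀ * D * E) j j = (fun i => E i j) ⬝ᵥ (D *ᵥ fun i => E i j) := by
  simp only [Matrix.mul_apply, Matrix.transpose_apply, dotProduct, Matrix.mulVec,
    Finset.sum_mul, Finset.mul_sum, dotProduct]
  rw [Finset.sum_comm]
  exact Finset.sum_congr rfl fun i _ => Finset.sum_congr rfl fun k _ => by ring

lemma trace_quad_nonneg {p r : ℕ} {D : Matrix (Fin p) (Fin p) ℝ} (hD : D.PosSemidef)
    (E : Matrix (Fin p) (Fin r) ℝ) : 0 ≤ Matrix.trace (Eᵀ * D * E) := by
  rw [Matrix.trace]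
  refine Finset.sum_nonneg fun j _ => ?_
  have := hD.dotProduct_mulVec_nonneg (fun i => E i j)
  simpa [quad_diag_entry, Matrix.diag] using this

lemma trace_quad_eq_zero_iff {p r : ℕ} {D : Matrix (Fin p) (Fin p) ℝ} (hD : D.PosDef)
    (E : Matrix (Fin p) (Fin r) ℝ) : Matrix.trace (Eᵀ * D * E) = 0 ↔ E = 0 := by
  constructor
  · intro h
    rw [Matrix.trace] at h
    have hnn : ∀ j ∈ Finset.univ, (0:ℝ) ≤ (Eᵀ * D * E).diag j := fun j _ => by
      have := hD.posSemidef.dotProduct_mulVec_nonneg (fun i => E i j)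
      simpa [quad_diag_entry, Matrix.diag] using this
    have hz := (Finset.sum_eq_zero_iff_of_nonneg hnn).mp h
    ext i j
    by_contra hne
    have hcol : (fun i => E i j) ≠ 0 := by
      intro hc
      exact hne (by simpa using congrFun hc i)
    have hpos := hD.dotProduct_mulVec_pos (x := fun i => E i j) hcol
    have hzj := hz j (Finset.mem_univ j)
    rw [Matrix.diag, quad_diag_entry] at hzj
    simp only [star_trivial] at hpos
    exact absurd hzj (ne_of_gt hpos)
  · intro h; simp [h]

lemma trace_sq_symm {p r : ℕ} (D : Matrix (Fin p) (Fin p) ℝ) (hD : Dᵀ = D)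
    (A B : Matrix (Fin p) (Fin r) ℝ) :
    Matrix.trace (Aᵀ * D * B) = Matrix.trace (Bᵀ * D * A) := by
  rw [← Matrix.trace_transpose (Aᵀ * D * B)]
  simp [Matrix.transpose_mul, hD, Matrix.mul_assoc]

/-- If `FᵀF = T·I_r`, `Q` is symmetric positive semidefinite and `α ≥ 0`, then
`I_p + αQ` is invertible and the penalized objective is uniquely minimized at
`B* = T⁻¹(I_p + αQ)⁻¹XᵀF`. -/
theorem penalized_objective_minimizer (T p r : ℕ) (hT : 0 < T) (hp : 0 < p) (hr : 0 < r)
    (X : Matrix (Fin T) (Fin p) ℝ) (F : Matrix (Fin T) (Fin r) ℝ)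
    (hF : Fᵀ * F = (T : ℝ) • (1 : Matrix (Fin r) (Fin r) ℝ))
    (Q : Matrix (Fin p) (Fin p) ℝ) (hQ : Q.PosSemidef)
    (α : ℝ) (hα : 0 ≤ α) :
    IsUnit ((1 : Matrix (Fin p) (Fin p) ℝ) + α • Q) ∧
      ∀ B : Matrix (Fin p) (Fin r) ℝ,
        penObj T p r X F Q α B ≥ penObj T p r X F Q α (penMinimizer T p r X F Q α) ∧
        (penObj T p r X F Q α B = penObj T p r X F Q α (penMinimizer T p r X F Q α)
          ↔ B = penMinimizer T p r X F Q α) := by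
  have hTne : (T : ℝ) ≠ 0 := Nat.cast_ne_zero.mpr hT.ne'
  have hpne : (p : ℝ) ≠ 0 := Nat.cast_ne_zero.mpr hp.ne'
  set D : Matrix (Fin p) (Fin p) ℝ := (1 : Matrix (Fin p) (Fin p) ℝ) + α • Q with hDdef
  have hαQ : (α • Q).PosSemidef := by
    refine Matrix.PosSemidef.of_dotProduct_mulVec_nonneg ?_ fun x => ?_
    · rw [Matrix.IsHermitian]
      rw [Matrix.conjTranspose_smul]
      rw [hQ.1.eq]
      simp
    · have := hQ.dotProduct_mulVec_nonneg x
      rw [Matrix.smul_mulVec, dotProduct_smul]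
      exact smul_nonneg hα this
  have hD : D.PosDef := Matrix.PosDef.one.add_posSemidef hαQ
  have hDunit : IsUnit D := hD.isUnit
  have hDsymm : Dᵀ = D := by
    rw [← Matrix.conjTranspose_eq_transpose_of_trivial]
    exact hD.isHermitian.eq
  have hDinv : D * D⁻¹ = 1 :=
    Matrix.mul_nonsing_inv D ((Matrix.isUnit_iff_isUnit_det D).mp hDunit)
  set Bs : Matrix (Fin p) (Fin r) ℝ := penMinimizer T p r X F Q α with hBsdef
  have hBs : D * Bs = (T : ℝ)⁻¹ • (Xᵀ * F) := by
    rw [hBsdef, penMinimizer, Matrix.mul_smul, ← hDdef, ← Matrix.mul_assoc, ← Matrix.mul_assoc,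
      hDinv, Matrix.one_mul]
  -- expansion of the objective
  have hexp : ∀ B : Matrix (Fin p) (Fin r) ℝ,
      penObj T p r X F Q α B = ((p : ℝ) * T)⁻¹ * Matrix.trace (Xᵀ * X)
        + (p : ℝ)⁻¹ * (Matrix.trace (Bᵀ * D * B)
            - 2 * (T : ℝ)⁻¹ * Matrix.trace (Bᵀ * (Xᵀ * F))) := by
    intro B
    have h1 : (X - F * Bᵀ)ᵀ * (X - F * Bᵀ)
        = Xᵀ * X - Xᵀ * (F * Bᵀ) - B * Fᵀ * X + (T : ℝ) • (B * Bᵀ) := by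
      have : B * Fᵀ * (F * Bᵀ) = (T : ℝ) • (B * Bᵀ) := by
        rw [Matrix.mul_assoc B, ← Matrix.mul_assoc Fᵀ, hF, Matrix.smul_mul, Matrix.one_mul,
          Matrix.mul_smul]
      rw [Matrix.transpose_sub, Matrix.transpose_mul, Matrix.transpose_transpose,
        Matrix.sub_mul, Matrix.mul_sub, Matrix.mul_sub, this]
      abel
    have h2 : Matrix.trace (Xᵀ * (F * Bᵀ)) = Matrix.trace (Bᵀ * (Xᵀ * F)) := by
      rw [← Matrix.mul_assoc, Matrix.trace_mul_comm]
    have h3 : Matrix.trace (B * Fᵀ * X) = Matrix.trace (Bᵀ * (Xᵀ * F)) := by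
      rw [← Matrix.trace_transpose (B * Fᵀ * X), Matrix.transpose_mul, Matrix.transpose_mul,
        Matrix.transpose_transpose]
      exact h2
    have h4 : Matrix.trace (B * Bᵀ) = Matrix.trace (Bᵀ * B) := Matrix.trace_mul_comm B Bᵀ
    have h5 : Matrix.trace (Bᵀ * D * B)
        = Matrix.trace (Bᵀ * B) + α * Matrix.trace (Bᵀ * Q * B) := by
      rw [hDdef]
      rw [Matrix.mul_add, Matrix.add_mul, Matrix.mul_one, Matrix.mul_smul, Matrix.smul_mul,
        Matrix.trace_add, Matrix.trace_smul]
      simp [Matrix.mul_assoc]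
    rw [penObj, h1]
    rw [Matrix.trace_add, Matrix.trace_sub, Matrix.trace_sub, Matrix.trace_smul, h2, h3, h4, h5]
    simp only [smul_eq_mul]
    field_simp
    ring
  -- the key difference identity
  have hkey : ∀ B : Matrix (Fin p) (Fin r) ℝ,
      penObj T p r X F Q α B - penObj T p r X F Q α Bs
        = (p : ℝ)⁻¹ * Matrix.trace ((B - Bs)ᵀ * D * (B - Bs)) := by
    intro B
    have hc1 : Matrix.trace (Bᵀ * D * Bs) = (T : ℝ)⁻¹ * Matrix.trace (Bᵀ * (Xᵀ * F)) := by
      rw [Matrix.mul_assoc, hBs, Matrix.mul_smul, Matrix.trace_smul, smul_eq_mul]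
    have hc2 : Matrix.trace (Bsᵀ * D * Bs) = (T : ℝ)⁻¹ * Matrix.trace (Bsᵀ * (Xᵀ * F)) := by
      rw [Matrix.mul_assoc, hBs, Matrix.mul_smul, Matrix.trace_smul, smul_eq_mul]
    have hc3 : Matrix.trace (Bsᵀ * D * B) = Matrix.trace (Bᵀ * D * Bs) :=
      trace_sq_symm D hDsymm Bs B
    have hE : Matrix.trace ((B - Bs)ᵀ * D * (B - Bs))
        = Matrix.trace (Bᵀ * D * B) - Matrix.trace (Bᵀ * D * Bs)
          - Matrix.trace (Bsᵀ * D * B) + Matrix.trace (Bsᵀ * D * Bs) := by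
      rw [Matrix.transpose_sub, Matrix.sub_mul, Matrix.sub_mul, Matrix.mul_sub, Matrix.mul_sub,
        Matrix.trace_sub, Matrix.trace_sub, Matrix.trace_sub]
      ring
    rw [hexp B, hexp Bs, hE, hc1, hc2, hc3, hc1]
    field_simp
    ring
  refine ⟨hDunit, fun B => ?_⟩
  have hnn := trace_quad_nonneg hD.posSemidef (B - Bs)
  have hiff := trace_quad_eq_zero_iff hD (B - Bs)
  have hpinv : (0:ℝ) < (p : ℝ)⁻¹ := by positivity
  constructor
  · have := mul_nonneg hpinv.le hnn
    rw [← hkey B] at this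
    linarith
  · constructor
    · intro h
      have h0 : (p : ℝ)⁻¹ * Matrix.trace ((B - Bs)ᵀ * D * (B - Bs)) = 0 := by
        rw [← hkey B, h]; ring
      have := (mul_eq_zero.mp h0).resolve_left hpinv.ne'
      have := hiff.mp this
      rw [sub_eq_zero] at this
      exact this
    · intro h
      rw [h]
end

section
/- Let T, p, r be positive integers, X a T×p real matrix, F a T×r real matrix satisfying FᵀF = T·I_r, Q a symmetric positive semidefinite p×p real matrix, and α ≥ 0. Then, with B* = T⁻¹(I_p + αQ)⁻¹XᵀF, the value of the penalized objective at the minimizer is (pT)⁻¹‖X − F(B*)ᵀ‖_F² + (α/p)·tr((B*)ᵀQB*) = (pT)⁻¹tr(XᵀX) − (pT²)⁻¹tr(FᵀX(I_p + αQ)⁻¹XᵀF). -/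
open Matrix BigOperators

/-- Value of the penalized objective at the minimizer `B* = T⁻¹(I_p + αQ)⁻¹XᵀF`:
`(pT)⁻¹‖X − F(B*)ᵀ‖_F² + (α/p)·tr((B*)ᵀQB*)
  = (pT)⁻¹tr(XᵀX) − (pT²)⁻¹tr(FᵀX(I_p + αQ)⁻¹XᵀF)`. -/
theorem penalized_objective_value_at_minimizer (T p r : ℕ) (hT : 0 < T) (hp : 0 < p)
    (hr : 0 < r)
    (X : Matrix (Fin T) (Fin p) ℝ) (F : Matrix (Fin T) (Fin r) ℝ)
    (hF : Fᵀ * F = (T : ℝ) • (1 : Matrix (Fin r) (Fin r) ℝ))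
    (Q : Matrix (Fin p) (Fin p) ℝ) (hQ : Q.PosSemidef)
    (α : ℝ) (hα : 0 ≤ α) :
    ((p : ℝ) * T)⁻¹ * Matrix.trace
        ((X - F * (penMinimizer T p r X F Q α)ᵀ)ᵀ * (X - F * (penMinimizer T p r X F Q α)ᵀ))
      + (α / p) * Matrix.trace
          ((penMinimizer T p r X F Q α)ᵀ * Q * penMinimizer T p r X F Q α)
    = ((p : ℝ) * T)⁻¹ * Matrix.trace (Xᵀ * X)
      - ((p : ℝ) * (T : ℝ) ^ 2)⁻¹ * Matrix.trace
          (Fᵀ * X * ((1 : Matrix (Fin p) (Fin p) ℝ) + α • Q)⁻¹ * Xᵀ * F) := by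
  have hTR : (T : ℝ) ≠ 0 := Nat.cast_ne_zero.2 hT.ne'
  have hpR : (p : ℝ) ≠ 0 := Nat.cast_ne_zero.2 hp.ne'
  set M : Matrix (Fin p) (Fin p) ℝ := 1 + α • Q with hMdef
  have hQsym : Qᵀ = Q := hQ.isHermitian.eq
  have hαQ : (α • Q).PosSemidef := by
    constructor
    · show (α • Q)ᴴ = α • Q
      rw [conjTranspose_smul, hQ.isHermitian.eq]
      simp
    · intro x
      have h0 := hQ.2 x
      simp only [star_trivial] at h0
      have e : (x.sum fun i xi => x.sum fun j xj => star xi * (α • Q) i j * xj)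
          = α * (x.sum fun i xi => x.sum fun j xj => xi * Q i j * xj) := by
        rw [Finsupp.mul_sum]
        apply Finsupp.sum_congr
        intro i _
        rw [Finsupp.mul_sum]
        apply Finsupp.sum_congr
        intro j _
        simp only [star_trivial, Matrix.smul_apply, smul_eq_mul]
        ring
      rw [e]
      exact mul_nonneg hα h0
  have hMpd : M.PosDef := Matrix.PosDef.add_posSemidef Matrix.PosDef.one hαQ
  have hdet : IsUnit M.det := (Matrix.isUnit_iff_isUnit_det M).1 hMpd.isUnit
  have hMl : M⁻¹ * M = 1 := nonsing_inv_mul M hdet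
  have hMsym : Mᵀ = M := by
    simp [hMdef, transpose_add, transpose_smul, hQsym]
  have hIsym : (M⁻¹)ᵀ = M⁻¹ := by rw [transpose_nonsing_inv, hMsym]
  set B := penMinimizer T p r X F Q α with hB
  set G : Matrix (Fin p) (Fin r) ℝ := Xᵀ * F with hG
  have hGt : Gᵀ = Fᵀ * X := by rw [hG, transpose_mul, transpose_transpose]
  have hBdef : B = (T : ℝ)⁻¹ • (M⁻¹ * Xᵀ * F) := rfl
  have hBG : B = (T : ℝ)⁻¹ • (M⁻¹ * G) := by rw [hBdef, Matrix.mul_assoc]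
  have hBt : Bᵀ = (T : ℝ)⁻¹ • (Gᵀ * M⁻¹) := by
    rw [hBG, transpose_smul, transpose_mul, hIsym]
  have hcomb : M⁻¹ * M⁻¹ + α • (M⁻¹ * (Q * M⁻¹)) = M⁻¹ := by
    have h1 : M⁻¹ * (M * M⁻¹) = M⁻¹ := by
      rw [← Matrix.mul_assoc, hMl, Matrix.one_mul]
    calc M⁻¹ * M⁻¹ + α • (M⁻¹ * (Q * M⁻¹))
        = M⁻¹ * ((1 + α • Q) * M⁻¹) := by
          rw [Matrix.add_mul, Matrix.mul_add, Matrix.one_mul, Matrix.smul_mul,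
            Matrix.mul_smul]
      _ = M⁻¹ := by rw [← hMdef, h1]
  set s : ℝ := Matrix.trace (Gᵀ * (M⁻¹ * G)) with hs
  set u : ℝ := Matrix.trace (Gᵀ * (M⁻¹ * M⁻¹ * G)) with hu
  set v : ℝ := Matrix.trace (Gᵀ * (M⁻¹ * (Q * M⁻¹) * G)) with hv
  have huv : u + α * v = s := by
    rw [hu, hv, hs]
    have h := congrArg
      (fun A : Matrix (Fin p) (Fin p) ℝ => Matrix.trace (Gᵀ * (A * G))) hcomb
    simpa [Matrix.add_mul, Matrix.mul_add, Matrix.smul_mul, Matrix.mul_smul, trace_add,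
      trace_smul, smul_eq_mul] using h
  have hc1 : Matrix.trace (Xᵀ * (F * Bᵀ)) = (T : ℝ)⁻¹ * s := by
    rw [hBt, Matrix.mul_smul, Matrix.mul_smul, trace_smul, smul_eq_mul, ← Matrix.mul_assoc,
      ← hG, trace_mul_comm, Matrix.mul_assoc, hs]
  have hc2 : Matrix.trace ((F * Bᵀ)ᵀ * X) = (T : ℝ)⁻¹ * s := by
    rw [transpose_mul, transpose_transpose, hBG, Matrix.smul_mul, Matrix.smul_mul,
      trace_smul, smul_eq_mul]
    congr 1
    rw [Matrix.mul_assoc, ← hGt, trace_mul_comm, hs]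
  have hFB : F * Bᵀ = (T : ℝ)⁻¹ • (F * (Gᵀ * M⁻¹)) := by rw [hBt, Matrix.mul_smul]
  have h2 : (F * (Gᵀ * M⁻¹))ᵀ * (F * (Gᵀ * M⁻¹))
      = (T : ℝ) • (M⁻¹ * G * (Gᵀ * M⁻¹)) := by
    rw [transpose_mul, transpose_mul, hIsym, transpose_transpose, Matrix.mul_assoc,
      ← Matrix.mul_assoc Fᵀ, hF, Matrix.smul_mul, Matrix.one_mul, Matrix.mul_smul,
      ← Matrix.mul_assoc]
  have h3 : Matrix.trace (M⁻¹ * G * (Gᵀ * M⁻¹)) = u := by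
    rw [trace_mul_comm, hu]
    congr 1
    simp [Matrix.mul_assoc]
  have hq : Matrix.trace ((F * Bᵀ)ᵀ * (F * Bᵀ)) = (T : ℝ)⁻¹ * u := by
    rw [hFB, transpose_smul, Matrix.smul_mul, Matrix.mul_smul, trace_smul, trace_smul,
      smul_eq_mul, smul_eq_mul, h2, trace_smul, smul_eq_mul, h3]
    field_simp
  have hpen : Matrix.trace (Bᵀ * Q * B) = (T : ℝ)⁻¹ * ((T : ℝ)⁻¹ * v) := by
    rw [hBt, hBG, Matrix.smul_mul, Matrix.smul_mul, Matrix.mul_smul, trace_smul, trace_smul,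
      smul_eq_mul, smul_eq_mul]
    congr 2
    rw [hv]
    congr 1
    simp [Matrix.mul_assoc]
  have hexp : Matrix.trace ((X - F * Bᵀ)ᵀ * (X - F * Bᵀ))
      = Matrix.trace (Xᵀ * X) - (T : ℝ)⁻¹ * s - (T : ℝ)⁻¹ * s + (T : ℝ)⁻¹ * u := by
    rw [transpose_sub, Matrix.sub_mul, Matrix.mul_sub, Matrix.mul_sub, trace_sub, trace_sub,
      trace_sub, hc1, hc2, hq]
    ring
  have hrhs : Matrix.trace (Fᵀ * X * M⁻¹ * Xᵀ * F) = s := by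
    rw [hs, ← hGt, Matrix.mul_assoc, ← hG, Matrix.mul_assoc]
  rw [hexp, hpen, hrhs, ← huv]
  field_simp
  ring
end

section
/- Let p, T be positive integers, let τ₁,…,τ_p ≥ 0 and b̃₁,…,b̃_p ∈ ℝ^r with max_j τ_j‖b̃_j‖² > 0, set β = (T·max_j{τ_j‖b̃_j‖²})⁻¹, and define h(α) = p⁻¹ Σ_{j=1}^p α²τ_j²‖b̃_j‖²/(1+ατ_j)² + (pT)⁻¹ Σ_{j=1}^p 1/(1+ατ_j)². Then h is monotonically nonincreasing on [0, β]: for all 0 ≤ α₁ ≤ α₂ ≤ β, h(α₂) ≤ h(α₁). -/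
open BigOperators

/-- The asymptotic error functional
`h(α) = p⁻¹ Σ_j α²τ_j²‖b̃_j‖²/(1+ατ_j)² + (pT)⁻¹ Σ_j 1/(1+ατ_j)²`
is monotonically nonincreasing on `[0, β]`, where `β = (T · max_j τ_j‖b̃_j‖²)⁻¹`
and `z = max_j τ_j‖b̃_j‖² > 0`. -/
theorem error_functional_nonincreasing (p T r : ℕ) (hp : 0 < p) (hT : 0 < T)
    (τ : Fin p → ℝ) (hτ : ∀ j, 0 ≤ τ j) (b : Fin p → Fin r → ℝ)
    (z : ℝ) (hz : IsGreatest (Set.range fun j => τ j * ∑ k, (b j k) ^ 2) z)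
    (hzpos : 0 < z)
    (h : ℝ → ℝ)
    (hh : ∀ α : ℝ, h α =
      (p : ℝ)⁻¹ * ∑ j, α ^ 2 * (τ j) ^ 2 * (∑ k, (b j k) ^ 2) / (1 + α * τ j) ^ 2
        + ((p : ℝ) * T)⁻¹ * ∑ j, 1 / (1 + α * τ j) ^ 2) :
    ∀ α₁ α₂ : ℝ, 0 ≤ α₁ → α₁ ≤ α₂ → α₂ ≤ ((T : ℝ) * z)⁻¹ → h α₂ ≤ h α₁ := by
  intro u v hu huv hvβ
  have hT0 : (0:ℝ) < T := by exact_mod_cast hT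
  have hv0 : 0 ≤ v := hu.trans huv
  rw [hh u, hh v]
  have hrw : ∀ α : ℝ,
      (p : ℝ)⁻¹ * ∑ j, α ^ 2 * (τ j) ^ 2 * (∑ k, (b j k) ^ 2) / (1 + α * τ j) ^ 2
        + ((p : ℝ) * T)⁻¹ * ∑ j, 1 / (1 + α * τ j) ^ 2
      = (p:ℝ)⁻¹ * ∑ j, (α ^ 2 * (τ j) ^ 2 * (∑ k, (b j k) ^ 2) / (1 + α * τ j) ^ 2
            + (T:ℝ)⁻¹ * (1 / (1 + α * τ j) ^ 2)) := by
    intro α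
    rw [Finset.sum_add_distrib, mul_add, mul_inv, mul_assoc, Finset.mul_sum, Finset.mul_sum]
  rw [hrw, hrw]
  apply mul_le_mul_of_nonneg_left _ (by positivity)
  apply Finset.sum_le_sum
  intro j _
  set c : ℝ := ∑ k, (b j k) ^ 2 with hc
  have hc0 : 0 ≤ c := by positivity
  have hτj : 0 ≤ τ j := hτ j
  have hτc : τ j * c ≤ z := hz.2 ⟨j, rfl⟩
  have hdu : (0:ℝ) < (1 + u * τ j) ^ 2 := by positivity
  have hdv : (0:ℝ) < (1 + v * τ j) ^ 2 := by positivity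
  have hvz : v * z ≤ (T:ℝ)⁻¹ := by
    have h1 : v * z ≤ ((T:ℝ) * z)⁻¹ * z := mul_le_mul_of_nonneg_right hvβ hzpos.le
    have h2 : ((T:ℝ) * z)⁻¹ * z = (T:ℝ)⁻¹ := by field_simp
    linarith [h2 ▸ h1]
  have hvs : v * (τ j * c) ≤ (T:ℝ)⁻¹ :=
    le_trans (mul_le_mul_of_nonneg_left hτc hv0) hvz
  have hus : u * (τ j * c) ≤ (T:ℝ)⁻¹ := by
    have : u * (τ j * c) ≤ v * (τ j * c) :=
      mul_le_mul_of_nonneg_right huv (mul_nonneg hτj hc0)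
    linarith
  have e1 : ∀ α : ℝ, α ^ 2 * (τ j) ^ 2 * c / (1 + α * τ j) ^ 2
      + (T:ℝ)⁻¹ * (1 / (1 + α * τ j) ^ 2)
      = (α ^ 2 * (τ j) ^ 2 * c + (T:ℝ)⁻¹) / (1 + α * τ j) ^ 2 := by
    intro α; rw [mul_one_div, ← add_div]
  rw [e1, e1, div_le_div_iff₀ hdv hdu]
  nlinarith [mul_nonneg (mul_nonneg hτj (sub_nonneg.2 huv)) (sub_nonneg.2 hus),
    mul_nonneg (mul_nonneg hτj (sub_nonneg.2 huv)) (sub_nonneg.2 hvs),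
    mul_nonneg (mul_nonneg (mul_nonneg (mul_nonneg hτj hτj) (sub_nonneg.2 huv)) hu)
      (sub_nonneg.2 hvs),
    mul_nonneg (mul_nonneg (mul_nonneg (mul_nonneg hτj hτj) (sub_nonneg.2 huv)) hv0)
      (sub_nonneg.2 hus)]
end

section
/- Let p, T be positive integers, let τ₁,…,τ_p ≥ 0 and b̃₁,…,b̃_p ∈ ℝ^r, and define h(α) = p⁻¹ Σ_{j=1}^p α²τ_j²‖b̃_j‖²/(1+ατ_j)² + (pT)⁻¹ Σ_{j=1}^p 1/(1+ατ_j)². Suppose there exists z > 0 such that τ_j‖b̃_j‖² = z for every j with τ_j ≠ 0, and that τ_j ≠ 0 for at least one j. Then α* = 1/(Tz) is a global minimum point of h on [0, ∞): for every α ≥ 0, h(α) ≥ h(α*). -/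
open BigOperators

lemma key_ineq (Tr z t B α : ℝ) (hTr : 0 < Tr) (hz : 0 < z) (ht : 0 < t)
    (hB : t * B = z) (hα : 0 ≤ α) :
    (1/(Tr*z)) ^ 2 * t ^ 2 * B / (1 + (1/(Tr*z)) * t) ^ 2
        + Tr⁻¹ * (1 / (1 + (1/(Tr*z)) * t) ^ 2)
      ≤ α ^ 2 * t ^ 2 * B / (1 + α * t) ^ 2 + Tr⁻¹ * (1 / (1 + α * t) ^ 2) := by
  have hB' : B = z / t := by field_simp at hB ⊢; linarith
  subst hB'
  have h1 : 0 < 1 + α * t := by nlinarith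
  have hL : (1/(Tr*z)) ^ 2 * t ^ 2 * (z/t) / (1 + (1/(Tr*z)) * t) ^ 2
      + Tr⁻¹ * (1 / (1 + (1/(Tr*z)) * t) ^ 2) = z / (Tr*z + t) := by
    have hd : Tr * z + t > 0 := by positivity
    field_simp
    ring
  have hR : α ^ 2 * t ^ 2 * (z/t) / (1 + α * t) ^ 2 + Tr⁻¹ * (1 / (1 + α * t) ^ 2)
      = (α ^ 2 * t * z * Tr + 1) / (Tr * (1 + α * t) ^ 2) := by
    field_simp
  rw [hL, hR, div_le_div_iff₀ (by positivity) (by positivity)]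
  nlinarith [mul_nonneg ht.le (sq_nonneg (α*Tr*z - 1))]

/-- If `τ_j‖b̃_j‖² = z > 0` for every `j` with `τ_j ≠ 0` (and some `τ_j ≠ 0`), then
`α* = 1/(Tz)` is a global minimum point of the asymptotic error functional
`h(α) = p⁻¹ Σ_j α²τ_j²‖b̃_j‖²/(1+ατ_j)² + (pT)⁻¹ Σ_j 1/(1+ατ_j)²` on `[0, ∞)`. -/
theorem error_functional_global_min (p T r : ℕ) (hp : 0 < p) (hT : 0 < T)
    (τ : Fin p → ℝ) (hτ : ∀ j, 0 ≤ τ j) (b : Fin p → Fin r → ℝ)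
    (z : ℝ) (hzpos : 0 < z)
    (hz : ∀ j, τ j ≠ 0 → τ j * (∑ k, (b j k) ^ 2) = z)
    (hex : ∃ j, τ j ≠ 0)
    (h : ℝ → ℝ)
    (hh : ∀ α : ℝ, h α =
      (p : ℝ)⁻¹ * ∑ j, α ^ 2 * (τ j) ^ 2 * (∑ k, (b j k) ^ 2) / (1 + α * τ j) ^ 2
        + ((p : ℝ) * T)⁻¹ * ∑ j, 1 / (1 + α * τ j) ^ 2) :
    ∀ α : ℝ, 0 ≤ α → h α ≥ h (1 / ((T : ℝ) * z)) := by
  intro α hα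
  have hTr : (0 : ℝ) < T := by exact_mod_cast hT
  have hpr : (0 : ℝ) < p := by exact_mod_cast hp
  have hcomb : ∀ β : ℝ, h β = (p : ℝ)⁻¹ *
      ∑ j, (β ^ 2 * (τ j) ^ 2 * (∑ k, (b j k) ^ 2) / (1 + β * τ j) ^ 2
        + (T : ℝ)⁻¹ * (1 / (1 + β * τ j) ^ 2)) := by
    intro β
    rw [hh β, Finset.sum_add_distrib, ← Finset.mul_sum, mul_inv]
    ring
  rw [ge_iff_le, hcomb α, hcomb (1 / ((T : ℝ) * z))]
  refine mul_le_mul_of_nonneg_left (Finset.sum_le_sum fun j _ => ?_) (by positivity)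
  rcases eq_or_ne (τ j) 0 with h0 | h0
  · simp [h0]
  · exact key_ineq (T : ℝ) z (τ j) _ α hTr hzpos ((hτ j).lt_of_ne' h0) (hz j h0) hα
end

section
/- Let p, T, r be positive integers, let U be a p×p real orthogonal matrix, let Λ = diag(τ₁,…,τ_p) with τ_j ≥ 0, let L = UΛUᵀ, let α ≥ 0, and set D₁ = I_p + αL. Let B be a p×r real matrix and write b̃_j for the j-th row of UᵀB. Then tr(Bᵀ(I_p − D₁⁻¹)B) = Σ_{j=1}^p α·τ_j·‖b̃_j‖²/(1+ατ_j). Moreover, if max_j τ_j‖b̃_j‖² > 0 and α = (T·max_j{τ_j‖b̃_j‖²})⁻¹, then p⁻¹·tr(Bᵀ(I_p − D₁⁻¹)B) ≤ 1/T. -/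
open Matrix BigOperators

/-- For the Laplacian-penalty shrinkage matrix `D₁ = I_p + αL`, `L = U diag(τ) Uᵀ` with `U`
orthogonal, `τ_j ≥ 0`, `α ≥ 0`:
`tr(Bᵀ(I_p − D₁⁻¹)B) = Σ_j ατ_j‖b̃_j‖²/(1+ατ_j)` where `b̃_j` is the `j`-th row of `UᵀB`;
moreover, if `z = max_j τ_j‖b̃_j‖² > 0` and `α = (Tz)⁻¹`, then
`p⁻¹ tr(Bᵀ(I_p − D₁⁻¹)B) ≤ 1/T`. -/
theorem laplacian_shrinkage_bias (p T r : ℕ) (hp : 0 < p) (hT : 0 < T) (hr : 0 < r)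
    (U : Matrix (Fin p) (Fin p) ℝ) (hU : Uᵀ * U = 1) (hU' : U * Uᵀ = 1)
    (τ : Fin p → ℝ) (hτ : ∀ j, 0 ≤ τ j)
    (α : ℝ) (hα : 0 ≤ α) (B : Matrix (Fin p) (Fin r) ℝ) :
    Matrix.trace (Bᵀ * ((1 : Matrix (Fin p) (Fin p) ℝ)
          - ((1 : Matrix (Fin p) (Fin p) ℝ) + α • (U * Matrix.diagonal τ * Uᵀ))⁻¹) * B)
        = ∑ j, α * τ j * (∑ k, ((Uᵀ * B) j k) ^ 2) / (1 + α * τ j) ∧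
    ∀ z : ℝ, 0 < z →
      IsGreatest (Set.range fun j => τ j * ∑ k, ((Uᵀ * B) j k) ^ 2) z →
      α = ((T : ℝ) * z)⁻¹ →
      (p : ℝ)⁻¹ * Matrix.trace (Bᵀ * ((1 : Matrix (Fin p) (Fin p) ℝ)
          - ((1 : Matrix (Fin p) (Fin p) ℝ) + α • (U * Matrix.diagonal τ * Uᵀ))⁻¹) * B)
        ≤ 1 / (T : ℝ) := by
  have hpos : ∀ j, 0 < 1 + α * τ j := fun j => by
    have := mul_nonneg hα (hτ j); linarith
  have hM : (1 : Matrix (Fin p) (Fin p) ℝ) + α • (U * Matrix.diagonal τ * Uᵀ)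
      = U * Matrix.diagonal (fun j => 1 + α * τ j) * Uᵀ := by
    have h1 : Matrix.diagonal (fun j => 1 + α * τ j)
        = (1 : Matrix (Fin p) (Fin p) ℝ) + α • Matrix.diagonal τ := by
      ext i j
      by_cases h : i = j <;>
        simp [Matrix.diagonal_apply, Matrix.one_apply, h]
    rw [h1, Matrix.mul_add, Matrix.add_mul, Matrix.mul_one, hU', Matrix.mul_smul,
      Matrix.smul_mul]
  have hInv : ((1 : Matrix (Fin p) (Fin p) ℝ) + α • (U * Matrix.diagonal τ * Uᵀ))⁻¹
      = U * Matrix.diagonal (fun j => (1 + α * τ j)⁻¹) * Uᵀ := by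
    apply Matrix.inv_eq_right_inv
    rw [hM]
    calc U * Matrix.diagonal (fun j => 1 + α * τ j) * Uᵀ *
          (U * Matrix.diagonal (fun j => (1 + α * τ j)⁻¹) * Uᵀ)
        = U * Matrix.diagonal (fun j => 1 + α * τ j) * (Uᵀ * U) *
            Matrix.diagonal (fun j => (1 + α * τ j)⁻¹) * Uᵀ := by
          simp only [Matrix.mul_assoc]
      _ = U * (Matrix.diagonal (fun j => 1 + α * τ j) *
            Matrix.diagonal (fun j => (1 + α * τ j)⁻¹)) * Uᵀ := by
          rw [hU]; simp only [Matrix.mul_one, Matrix.mul_assoc]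
      _ = 1 := by
          rw [Matrix.diagonal_mul_diagonal]
          have : (fun j => (1 + α * τ j) * (1 + α * τ j)⁻¹) = fun _ => (1:ℝ) := by
            funext j; exact mul_inv_cancel₀ (hpos j).ne'
          rw [this, Matrix.diagonal_one, Matrix.mul_one, hU']
  have hdiff : (1 : Matrix (Fin p) (Fin p) ℝ)
      - ((1 : Matrix (Fin p) (Fin p) ℝ) + α • (U * Matrix.diagonal τ * Uᵀ))⁻¹
      = U * Matrix.diagonal (fun j => α * τ j / (1 + α * τ j)) * Uᵀ := by
    rw [hInv]
    have h1 : Matrix.diagonal (fun j => α * τ j / (1 + α * τ j))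
        = (1 : Matrix (Fin p) (Fin p) ℝ) - Matrix.diagonal (fun j => (1 + α * τ j)⁻¹) := by
      ext i j
      by_cases h : i = j <;>
        simp [Matrix.diagonal_apply, Matrix.one_apply, h]
      · rw [eq_sub_iff_add_eq, inv_eq_one_div, ← add_div,
          div_eq_one_iff_eq (hpos j).ne']
        ring
    rw [h1, Matrix.mul_sub, Matrix.sub_mul, Matrix.mul_one, hU']
  have htr : ∀ d : Fin p → ℝ,
      Matrix.trace (Bᵀ * (U * Matrix.diagonal d * Uᵀ) * B)
        = ∑ j, d j * ∑ k, ((Uᵀ * B) j k) ^ 2 := by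
    intro d
    have : Bᵀ * (U * Matrix.diagonal d * Uᵀ) * B
        = (Uᵀ * B)ᵀ * Matrix.diagonal d * (Uᵀ * B) := by
      rw [Matrix.transpose_mul, Matrix.transpose_transpose]
      simp only [Matrix.mul_assoc]
    rw [this]
    have e1 : ∀ k, ((Uᵀ * B)ᵀ * Matrix.diagonal d * (Uᵀ * B)) k k
        = ∑ j, d j * ((Uᵀ * B) j k) ^ 2 := by
      intro k
      rw [Matrix.mul_apply]
      refine Finset.sum_congr rfl fun j _ => ?_
      rw [Matrix.mul_diagonal, Matrix.transpose_apply]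
      ring
    rw [Matrix.trace]
    simp only [Matrix.diag_apply]
    rw [Finset.sum_congr rfl fun k _ => e1 k, Finset.sum_comm]
    exact Finset.sum_congr rfl fun j _ => (Finset.mul_sum _ _ _).symm
  have key : Matrix.trace (Bᵀ * ((1 : Matrix (Fin p) (Fin p) ℝ)
          - ((1 : Matrix (Fin p) (Fin p) ℝ) + α • (U * Matrix.diagonal τ * Uᵀ))⁻¹) * B)
        = ∑ j, α * τ j * (∑ k, ((Uᵀ * B) j k) ^ 2) / (1 + α * τ j) := by
    rw [hdiff, htr]
    refine Finset.sum_congr rfl fun j _ => ?_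
    rw [div_mul_eq_mul_div]
  refine ⟨key, ?_⟩
  intro z hz hg hαz
  rw [key]
  have hzT : (0:ℝ) < T := by exact_mod_cast hT
  have hbound : ∀ j : Fin p, α * τ j * (∑ k, ((Uᵀ * B) j k) ^ 2) / (1 + α * τ j)
      ≤ 1 / (T : ℝ) := by
    intro j
    have hS : 0 ≤ ∑ k, ((Uᵀ * B) j k) ^ 2 :=
      Finset.sum_nonneg fun k _ => sq_nonneg _
    have hle : τ j * ∑ k, ((Uᵀ * B) j k) ^ 2 ≤ z := hg.2 ⟨j, rfl⟩
    have h1 : α * τ j * (∑ k, ((Uᵀ * B) j k) ^ 2) / (1 + α * τ j)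
        ≤ α * τ j * (∑ k, ((Uᵀ * B) j k) ^ 2) := by
      apply div_le_self
      · have := mul_nonneg (mul_nonneg hα (hτ j)) hS; linarith
      · have := mul_nonneg hα (hτ j); linarith
    have h2 : α * τ j * (∑ k, ((Uᵀ * B) j k) ^ 2) ≤ α * z := by
      rw [mul_assoc]
      exact mul_le_mul_of_nonneg_left hle hα
    have h3 : α * z = 1 / (T : ℝ) := by
      rw [hαz]; field_simp
    linarith
  calc (p : ℝ)⁻¹ * ∑ j, α * τ j * (∑ k, ((Uᵀ * B) j k) ^ 2) / (1 + α * τ j)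
      ≤ (p : ℝ)⁻¹ * ∑ j : Fin p, 1 / (T : ℝ) := by
        apply mul_le_mul_of_nonneg_left (Finset.sum_le_sum fun j _ => hbound j)
        positivity
    _ = 1 / (T : ℝ) := by
        rw [Finset.sum_const, Finset.card_fin]
        field_simp
        rw [nsmul_eq_mul]; field_simp
end

section
/- Let M > 0. Let 𝓔 = (ε_tj) be a T×p matrix of mutually independent real-valued random variables with E[ε_tj] = 0, E[ε_tj²] = 1, and E[ε_tj⁴] ≤ M for all t, j, and let F be a random T×r real matrix, independent of the family (ε_tj), satisfying E[‖vᵀF‖²] ≤ M‖v‖² for every v ∈ ℝ^T. Let Q be a symmetric p×p real matrix, let P be a deterministic T×T real matrix whose operator norm satisfies ‖P‖ ≤ M, and let u ∈ ℝ^T with ‖u‖ = 1. Then there is a constant C depending only on M (and not on p, T, r, u, P, Q, or the distributions) such that E[‖uᵀ𝓔Q𝓔ᵀPF − tr(Q)·uᵀPF‖²] ≤ C·T·‖Q‖_F². -/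
open MeasureTheory ProbabilityTheory Matrix BigOperators

set_option linter.unusedSectionVars false
set_option maxHeartbeats 1000000

private lemma abs_mul4_le (a b c d : ℝ) : |a*b*c*d| ≤ (a^4+b^4+c^4+d^4)/4 := by
  have h1 : |a*b| ≤ (a^2+b^2)/2 := by
    rw [abs_le]; constructor <;> nlinarith [sq_nonneg (a+b), sq_nonneg (a-b)]
  have h2 : |c*d| ≤ (c^2+d^2)/2 := by
    rw [abs_le]; constructor <;> nlinarith [sq_nonneg (c+d), sq_nonneg (c-d)]
  calc |a*b*c*d| = |a*b| * |c*d| := by rw [← abs_mul]; ring_nf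
    _ ≤ (a^2+b^2)/2 * ((c^2+d^2)/2) := by
        apply mul_le_mul h1 h2 (abs_nonneg _) ((abs_nonneg (a*b)).trans h1)
    _ ≤ (a^4+b^4+c^4+d^4)/4 := by
        nlinarith [sq_nonneg (a^2+b^2-c^2-d^2), sq_nonneg (a^2-b^2), sq_nonneg (c^2-d^2)]

section moments
variable {Ω : Type} [MeasurableSpace Ω] {μ : Measure Ω} [IsProbabilityMeasure μ]
variable {ι : Type*} [DecidableEq ι] {X : ι → Ω → ℝ}
variable (hmeas : ∀ i, Measurable (X i))
variable (h4i : ∀ i, Integrable (fun ω => (X i ω) ^ 4) μ)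

include hmeas h4i

private lemma int4 (i j k l : ι) : Integrable (fun ω => X i ω * X j ω * X k ω * X l ω) μ := by
  refine Integrable.mono' ((((h4i i).add (h4i j)).add ((h4i k).add (h4i l))).div_const 4) ?_ ?_
  · exact ((((hmeas i).mul (hmeas j)).mul (hmeas k)).mul (hmeas l)).aestronglyMeasurable
  · filter_upwards with ω
    have := abs_mul4_le (X i ω) (X j ω) (X k ω) (X l ω)
    simpa [norm] using this.trans (le_of_eq (by ring))

private lemma int1 (i : ι) : Integrable (X i) μ := by
  refine Integrable.mono' (((h4i i).add (integrable_const 3)).div_const 4)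
    (hmeas i).aestronglyMeasurable ?_
  filter_upwards with ω
  have h := abs_mul4_le (X i ω) 1 1 1
  simp only [mul_one, one_pow] at h
  simpa [norm] using h.trans (le_of_eq (by ring))

private lemma int2 (i j : ι) : Integrable (fun ω => X i ω * X j ω) μ := by
  refine Integrable.mono' ((((h4i i).add (h4i j)).add (integrable_const 2)).div_const 4)
    ((hmeas i).mul (hmeas j)).aestronglyMeasurable ?_
  filter_upwards with ω
  have h := abs_mul4_le (X i ω) (X j ω) 1 1
  simp only [mul_one, one_pow] at h
  simpa [norm] using h.trans (le_of_eq (by ring))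

private lemma int3 (i j k : ι) : Integrable (fun ω => X i ω * X j ω * X k ω) μ := by
  refine Integrable.mono'
    (((((h4i i).add (h4i j)).add (h4i k)).add (integrable_const 1)).div_const 4)
    (((hmeas i).mul (hmeas j)).mul (hmeas k)).aestronglyMeasurable ?_
  filter_upwards with ω
  have h := abs_mul4_le (X i ω) (X j ω) (X k ω) 1
  simp only [mul_one, one_pow] at h
  simpa [norm] using h.trans (le_of_eq (by ring))

variable (hindep : iIndepFun X μ)
variable (h0 : ∀ i, ∫ ω, X i ω ∂μ = 0)
variable (h2 : ∀ i, ∫ ω, (X i ω) ^ 2 ∂μ = 1)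

include hindep h0 h2

private lemma Emul (i j : ι) : ∫ ω, X i ω * X j ω ∂μ = if i = j then 1 else 0 := by
  by_cases h : i = j
  · subst h
    simp only [if_true]
    rw [← h2 i]; congr 1; funext ω; ring
  · rw [if_neg h]
    have := (hindep.indepFun h).integral_mul_eq_mul_integral (int1 hmeas h4i i).aestronglyMeasurable (int1 hmeas h4i j).aestronglyMeasurable
    rw [show (fun ω => X i ω * X j ω) = X i * X j from rfl, this, h0 i, zero_mul]

private lemma E22 (i j k l : ι) (hik : i ≠ k) (hil : i ≠ l) (hjk : j ≠ k) (hjl : j ≠ l) :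
    ∫ ω, X i ω * X j ω * (X k ω * X l ω) ∂μ
      = (∫ ω, X i ω * X j ω ∂μ) * ∫ ω, X k ω * X l ω ∂μ :=
  (hindep.indepFun_mul_mul hmeas i j k l hik hil hjk hjl).integral_mul_eq_mul_integral
    (int2 hmeas h4i i j).aestronglyMeasurable (int2 hmeas h4i k l).aestronglyMeasurable

private lemma E31 (i j : ι) (hij : i ≠ j) : ∫ ω, X i ω * X i ω * X i ω * X j ω ∂μ = 0 := by
  have hind : IndepFun (fun ω => X i ω * X i ω * X i ω) (X j) μ :=
    (hindep.indepFun hij).comp (φ := fun x : ℝ => x * x * x) (ψ := id)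
      (by measurability) measurable_id
  have h := hind.integral_mul_eq_mul_integral (int3 hmeas h4i i i i).aestronglyMeasurable (int1 hmeas h4i j).aestronglyMeasurable
  rw [show (fun ω => X i ω * X i ω * X i ω * X j ω)
      = (fun ω => X i ω * X i ω * X i ω) * X j from rfl, h, h0 j, mul_zero]

private lemma Equad (a b c d : ι) :
    ∫ ω, X a ω * X b ω * X c ω * X d ω ∂μ
      = ((if a = b then (1:ℝ) else 0) * (if c = d then 1 else 0)
        + (if a = c then 1 else 0) * (if b = d then 1 else 0)
        + (if a = d then 1 else 0) * (if b = c then 1 else 0))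
        + (if a = b ∧ a = c ∧ a = d then (∫ ω, X a ω ^ 4 ∂μ) - 3 else 0) := by
  have EM := Emul hmeas h4i hindep h0 h2 (μ := μ) (X := X)
  by_cases hab : a = b
  · subst hab
    by_cases hac : a = c
    · subst hac
      by_cases had : a = d
      · subst had
        rw [show (fun ω => X a ω * X a ω * X a ω * X a ω) = fun ω => X a ω ^ 4 from by
          funext ω; ring]
        simp only [if_true, and_self]
        ring
      · rw [E31 hmeas h4i hindep h0 h2 a d had]; simp [had]
    · by_cases hcd : c = d
      · subst hcd
        rw [show (fun ω => X a ω * X a ω * X c ω * X c ω)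
            = fun ω => X a ω * X a ω * (X c ω * X c ω) from by funext ω; ring,
          E22 hmeas h4i hindep h0 h2 a a c c hac hac hac hac, EM, EM]
        simp [hac]
      · by_cases had : a = d
        · subst had
          rw [show (fun ω => X a ω * X a ω * X c ω * X a ω)
              = fun ω => X a ω * X a ω * X a ω * X c ω from by funext ω; ring,
            E31 hmeas h4i hindep h0 h2 a c hac]
          simp [hac, hcd, fun h : c = a => hac h.symm]
        · rw [show (fun ω => X a ω * X a ω * X c ω * X d ω)
              = fun ω => X a ω * X a ω * (X c ω * X d ω) from by funext ω; ring,
            E22 hmeas h4i hindep h0 h2 a a c d hac had hac had, EM, EM]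
          simp [hac, had, hcd]
  · by_cases hcd : c = d
    · subst hcd
      by_cases hac : a = c
      · subst hac
        rw [show (fun ω => X a ω * X b ω * X a ω * X a ω)
            = fun ω => X a ω * X a ω * X a ω * X b ω from by funext ω; ring,
          E31 hmeas h4i hindep h0 h2 a b hab]
        simp [hab, Ne.symm hab]
      · by_cases hbc : b = c
        · subst hbc
          rw [show (fun ω => X a ω * X b ω * X b ω * X b ω)
              = fun ω => X b ω * X b ω * X b ω * X a ω from by funext ω; ring,
            E31 hmeas h4i hindep h0 h2 b a (Ne.symm hab)]
          simp [hab, hac]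
        · rw [show (fun ω => X a ω * X b ω * X c ω * X c ω)
              = fun ω => X a ω * X b ω * (X c ω * X c ω) from by funext ω; ring,
            E22 hmeas h4i hindep h0 h2 a b c c hac hac hbc hbc, EM, EM]
          simp [hab, hac, hbc]
    · by_cases hac : a = c
      · subst hac
        by_cases hbd : b = d
        · subst hbd
          rw [show (fun ω => X a ω * X b ω * X a ω * X b ω)
              = fun ω => X a ω * X a ω * (X b ω * X b ω) from by funext ω; ring,
            E22 hmeas h4i hindep h0 h2 a a b b hab hab hab hab, EM, EM]
          simp [hab, hcd]
        · have had : a ≠ d := hcd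
          rw [show (fun ω => X a ω * X b ω * X a ω * X d ω)
              = fun ω => X a ω * X a ω * (X b ω * X d ω) from by funext ω; ring,
            E22 hmeas h4i hindep h0 h2 a a b d hab had hab had, EM, EM]
          simp [hab, had, hbd]
      · by_cases had : a = d
        · subst had
          rw [show (fun ω => X a ω * X b ω * X c ω * X a ω)
              = fun ω => X a ω * X a ω * (X b ω * X c ω) from by funext ω; ring,
            E22 hmeas h4i hindep h0 h2 a a b c hab hac hab hac, EM, EM]
          simp [hab, hac, Ne.symm hab]
        · by_cases hbc : b = c
          · subst hbc
            have hbd : b ≠ d := hcd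
            rw [show (fun ω => X a ω * X b ω * X b ω * X d ω)
                = fun ω => X b ω * X b ω * (X a ω * X d ω) from by funext ω; ring,
              E22 hmeas h4i hindep h0 h2 b b a d (Ne.symm hab) hbd (Ne.symm hab) hbd, EM, EM]
            simp [hab, hac, had, hbd]
          · by_cases hbd : b = d
            · subst hbd
              rw [show (fun ω => X a ω * X b ω * X c ω * X b ω)
                  = fun ω => X b ω * X b ω * (X a ω * X c ω) from by funext ω; ring,
                E22 hmeas h4i hindep h0 h2 b b a c (Ne.symm hab) hbc (Ne.symm hab) hbc, EM, EM]
              simp [hab, hac, hbc, hcd]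
            · rw [show (fun ω => X a ω * X b ω * X c ω * X d ω)
                  = fun ω => X a ω * X b ω * (X c ω * X d ω) from by funext ω; ring,
                E22 hmeas h4i hindep h0 h2 a b c d hac had hbc hbd, EM, EM]
              simp [hab, hac, had, hbc, hbd, hcd]

end moments


private lemma S1inner {T p : ℕ} (u : Fin T → ℝ) (Q : Matrix (Fin p) (Fin p) ℝ) (s : Fin T) :
    ∑ q : (Fin T × Fin p) × Fin p, (u q.1.1 * Q q.1.2 q.2) *
      (if q.1 = (s, q.2) then (1:ℝ) else 0) = u s * ∑ j, Q j j := by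
  rw [Fintype.sum_prod_type, Finset.sum_comm, Finset.mul_sum]
  apply Finset.sum_congr rfl
  intro l _
  simp [mul_ite, Finset.sum_ite_eq', Finset.mem_univ]

private lemma kappa_sum (M : ℝ) (hM0 : 0 ≤ M) {T p : ℕ} (u : Fin T → ℝ) (hu : ∑ t, u t ^ 2 = 1)
    (Q : Matrix (Fin p) (Fin p) ℝ) (hQ : Qᵀ = Q) (m : Fin T × Fin p → ℝ)
    (hmM : ∀ i, m i ≤ M) (s : Fin T) :
    ∑ q : (Fin T × Fin p) × Fin p, ∑ q' : (Fin T × Fin p) × Fin p,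
      ((u q.1.1 * Q q.1.2 q.2) * (u q'.1.1 * Q q'.1.2 q'.2)) *
      ((((if q.1 = (s, q.2) then (1:ℝ) else 0) * (if q'.1 = (s, q'.2) then 1 else 0)
        + (if q.1 = q'.1 then 1 else 0) * (if ((s, q.2) : Fin T × Fin p) = (s, q'.2) then 1 else 0)
        + (if q.1 = (s, q'.2) then 1 else 0) * (if ((s, q.2) : Fin T × Fin p) = q'.1 then 1 else 0))
       + (if q.1 = (s, q.2) ∧ q.1 = q'.1 ∧ q.1 = (s, q'.2) then m q.1 - 3 else 0)))
    ≤ (u s * ∑ j, Q j j) ^ 2 + (1 + (M + 4) * u s ^ 2) * (∑ i, ∑ j, Q i j ^ 2) := by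
  have key : ∀ q q' : (Fin T × Fin p) × Fin p,
      ((u q.1.1 * Q q.1.2 q.2) * (u q'.1.1 * Q q'.1.2 q'.2)) *
      ((((if q.1 = (s, q.2) then (1:ℝ) else 0) * (if q'.1 = (s, q'.2) then 1 else 0)
        + (if q.1 = q'.1 then 1 else 0) * (if ((s, q.2) : Fin T × Fin p) = (s, q'.2) then 1 else 0)
        + (if q.1 = (s, q'.2) then 1 else 0) * (if ((s, q.2) : Fin T × Fin p) = q'.1 then 1 else 0))
       + (if q.1 = (s, q.2) ∧ q.1 = q'.1 ∧ q.1 = (s, q'.2) then m q.1 - 3 else 0)))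
      = ((u q.1.1 * Q q.1.2 q.2) * (if q.1 = (s, q.2) then (1:ℝ) else 0))
          * ((u q'.1.1 * Q q'.1.2 q'.2) * (if q'.1 = (s, q'.2) then 1 else 0))
        + ((u q.1.1 * Q q.1.2 q.2) * (u q'.1.1 * Q q'.1.2 q'.2)) *
            ((if q.1 = q'.1 then 1 else 0) * (if ((s, q.2) : Fin T × Fin p) = (s, q'.2) then 1 else 0))
        + ((u q.1.1 * Q q.1.2 q.2) * (u q'.1.1 * Q q'.1.2 q'.2)) *
            ((if q.1 = (s, q'.2) then 1 else 0) * (if ((s, q.2) : Fin T × Fin p) = q'.1 then 1 else 0))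
        + ((u q.1.1 * Q q.1.2 q.2) * (u q'.1.1 * Q q'.1.2 q'.2)) *
            (if q.1 = (s, q.2) ∧ q.1 = q'.1 ∧ q.1 = (s, q'.2) then m q.1 - 3 else 0) := by
    intro q q'; ring
  simp_rw [key, Finset.sum_add_distrib]
  -- S1
  have hS1 : ∑ q : (Fin T × Fin p) × Fin p, ∑ q' : (Fin T × Fin p) × Fin p,
      ((u q.1.1 * Q q.1.2 q.2) * (if q.1 = (s, q.2) then (1:ℝ) else 0))
        * ((u q'.1.1 * Q q'.1.2 q'.2) * (if q'.1 = (s, q'.2) then 1 else 0))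
      = (u s * ∑ j, Q j j) ^ 2 := by
    rw [← Finset.sum_mul_sum]
    have hin : ∑ q : (Fin T × Fin p) × Fin p, (u q.1.1 * Q q.1.2 q.2) *
        (if q.1 = (s, q.2) then (1:ℝ) else 0) = u s * ∑ j, Q j j := by
      rw [Fintype.sum_prod_type, Finset.sum_comm, Finset.mul_sum]
      apply Finset.sum_congr rfl
      intro l _
      simp [mul_ite, Finset.sum_ite_eq', Finset.mem_univ]
    rw [hin]; ring
  have hS2 : ∑ q : (Fin T × Fin p) × Fin p, ∑ q' : (Fin T × Fin p) × Fin p,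
      ((u q.1.1 * Q q.1.2 q.2) * (u q'.1.1 * Q q'.1.2 q'.2)) *
      ((if q.1 = q'.1 then (1:ℝ) else 0) * (if ((s, q.2) : Fin T × Fin p) = (s, q'.2) then 1 else 0))
      = (∑ t, u t ^ 2) * (∑ i, ∑ j, Q i j ^ 2) := by
    have h1 : ∀ q : (Fin T × Fin p) × Fin p,
        ∑ q' : (Fin T × Fin p) × Fin p, ((u q.1.1 * Q q.1.2 q.2) * (u q'.1.1 * Q q'.1.2 q'.2)) *
          ((if q.1 = q'.1 then (1:ℝ) else 0) * (if ((s, q.2) : Fin T × Fin p) = (s, q'.2) then 1 else 0))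
        = (u q.1.1 * Q q.1.2 q.2) ^ 2 := by
      intro q
      rw [Fintype.sum_prod_type]
      simp [mul_ite, ite_mul, Prod.mk.injEq, Finset.sum_ite_eq, Finset.mem_univ]
      ring
    rw [Finset.sum_congr rfl (fun q _ => h1 q), Fintype.sum_prod_type, Fintype.sum_prod_type]
    rw [Finset.sum_mul]
    apply Finset.sum_congr rfl
    intro t _
    rw [Finset.mul_sum]
    apply Finset.sum_congr rfl
    intro j _
    rw [Finset.mul_sum]
    apply Finset.sum_congr rfl
    intro l _
    ring
  have hS3 : ∑ q : (Fin T × Fin p) × Fin p, ∑ q' : (Fin T × Fin p) × Fin p,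
      ((u q.1.1 * Q q.1.2 q.2) * (u q'.1.1 * Q q'.1.2 q'.2)) *
      ((if q.1 = (s, q'.2) then (1:ℝ) else 0) * (if ((s, q.2) : Fin T × Fin p) = q'.1 then 1 else 0))
      = u s ^ 2 * (∑ i, ∑ j, Q i j ^ 2) := by
    have h1 : ∀ q : (Fin T × Fin p) × Fin p,
        ∑ q' : (Fin T × Fin p) × Fin p, ((u q.1.1 * Q q.1.2 q.2) * (u q'.1.1 * Q q'.1.2 q'.2)) *
          ((if q.1 = (s, q'.2) then (1:ℝ) else 0) * (if ((s, q.2) : Fin T × Fin p) = q'.1 then 1 else 0))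
        = (u q.1.1 * Q q.1.2 q.2) * (u s * Q q.2 q.1.2) * (if q.1.1 = s then 1 else 0) := by
      intro q
      rw [Fintype.sum_prod_type, Finset.sum_comm]
      simp only [Prod.ext_iff, mul_ite, ite_mul, mul_one, mul_zero, one_mul, zero_mul,
        ite_and, Fintype.sum_prod_type, Finset.sum_ite_eq, Finset.sum_ite_eq', Finset.mem_univ,
        if_true, Finset.sum_ite_irrel, Finset.sum_const_zero]
    rw [Finset.sum_congr rfl (fun q _ => h1 q), Fintype.sum_prod_type, Fintype.sum_prod_type]
    simp only [mul_ite, ite_mul, mul_one, mul_zero, Finset.sum_ite_eq, Finset.sum_ite_irrel,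
      Finset.sum_const_zero, Finset.sum_ite_eq', Finset.mem_univ, if_true]
    simp only [Finset.mul_sum]
    apply Finset.sum_congr rfl
    intro j _
    apply Finset.sum_congr rfl
    intro l _
    have hql : Q l j = Q j l := by conv_lhs => rw [← hQ, Matrix.transpose_apply]
    rw [hql]; ring
  have hS4eq : ∑ q : (Fin T × Fin p) × Fin p, ∑ q' : (Fin T × Fin p) × Fin p,
      ((u q.1.1 * Q q.1.2 q.2) * (u q'.1.1 * Q q'.1.2 q'.2)) *
      (if q.1 = (s, q.2) ∧ q.1 = q'.1 ∧ q.1 = (s, q'.2) then m q.1 - 3 else 0)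
      = ∑ j, (u s * Q j j) ^ 2 * (m (s, j) - 3) := by
    simp only [Fintype.sum_prod_type, Prod.ext_iff, mul_ite, ite_mul, mul_one, mul_zero, one_mul,
      zero_mul, ite_and, Finset.sum_ite_eq, Finset.sum_ite_eq', Finset.sum_ite_irrel,
      Finset.sum_const_zero, Finset.mem_univ, if_true]
    exact Finset.sum_congr rfl fun j _ => by ring
  have hdiag : ∑ j, Q j j ^ 2 ≤ ∑ i, ∑ j, Q i j ^ 2 := by
    apply Finset.sum_le_sum
    intro i _
    exact Finset.single_le_sum (f := fun j => Q i j ^ 2) (fun j _ => sq_nonneg _)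
      (Finset.mem_univ i)
  have hSQ : (0:ℝ) ≤ ∑ i, ∑ j, Q i j ^ 2 :=
    Finset.sum_nonneg fun i _ => Finset.sum_nonneg fun j _ => sq_nonneg _
  have hS4 : ∑ j, (u s * Q j j) ^ 2 * (m (s, j) - 3)
      ≤ (M + 3) * u s ^ 2 * (∑ i, ∑ j, Q i j ^ 2) := by
    calc ∑ j, (u s * Q j j) ^ 2 * (m (s, j) - 3)
        ≤ ∑ j, (u s * Q j j) ^ 2 * (M + 3) := by
          apply Finset.sum_le_sum
          intro j _
          apply mul_le_mul_of_nonneg_left _ (sq_nonneg _)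
          have := hmM (s, j); linarith
      _ = (M + 3) * u s ^ 2 * ∑ j, Q j j ^ 2 := by
          rw [Finset.mul_sum]
          exact Finset.sum_congr rfl fun j _ => by ring
      _ ≤ (M + 3) * u s ^ 2 * (∑ i, ∑ j, Q i j ^ 2) := by
          exact mul_le_mul_of_nonneg_left hdiag (by positivity)
  rw [hS1, hS2, hS3, hS4eq, hu]
  nlinarith [sq_nonneg (u s), hSQ, hS4]

section wmom
variable {Ω : Type} [MeasurableSpace Ω] {μ : Measure Ω} [IsProbabilityMeasure μ]
variable {T p : ℕ} {X : Fin T × Fin p → Ω → ℝ}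
variable (hmeas : ∀ i, Measurable (X i))
variable (h4i : ∀ i, Integrable (fun ω => (X i ω) ^ 4) μ)
variable (hindep : iIndepFun X μ)
variable (h0 : ∀ i, ∫ ω, X i ω ∂μ = 0)
variable (h2 : ∀ i, ∫ ω, (X i ω) ^ 2 ∂μ = 1)


include hmeas h4i hindep h0 h2

private lemma w_moment (M : ℝ) (hM0 : 0 ≤ M) (h4bd : ∀ i, ∫ ω, (X i ω) ^ 4 ∂μ ≤ M)
    (u : Fin T → ℝ) (hu : ∑ t, u t ^ 2 = 1)
    (Q : Matrix (Fin p) (Fin p) ℝ) (hQ : Qᵀ = Q) (s : Fin T) :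
    Integrable (fun ω => (∑ q : (Fin T × Fin p) × Fin p,
        (u q.1.1 * Q q.1.2 q.2) * (X q.1 ω * X (s, q.2) ω) - u s * ∑ j, Q j j) ^ 2) μ ∧
    ∫ ω, (∑ q : (Fin T × Fin p) × Fin p,
        (u q.1.1 * Q q.1.2 q.2) * (X q.1 ω * X (s, q.2) ω) - u s * ∑ j, Q j j) ^ 2 ∂μ
      ≤ (1 + (M + 4) * u s ^ 2) * (∑ i, ∑ j, Q i j ^ 2) := by
  set c : (Fin T × Fin p) × Fin p → ℝ := fun q => u q.1.1 * Q q.1.2 q.2 with hc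
  set Z : Ω → ℝ := fun ω => ∑ q : (Fin T × Fin p) × Fin p, c q * (X q.1 ω * X (s, q.2) ω) with hZ
  set k : ℝ := u s * ∑ j, Q j j with hk
  have intZ : Integrable Z μ := by
    apply integrable_finset_sum
    intro q _
    exact (int2 hmeas h4i q.1 (s, q.2)).const_mul _
  have hZsq : ∀ ω, (Z ω) ^ 2 = ∑ q : (Fin T × Fin p) × Fin p, ∑ q' : (Fin T × Fin p) × Fin p,
      (c q * c q') * (X q.1 ω * X (s, q.2) ω * X q'.1 ω * X (s, q'.2) ω) := by
    intro ω
    rw [sq, hZ, Finset.sum_mul_sum]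
    exact Finset.sum_congr rfl fun q _ => Finset.sum_congr rfl fun q' _ => by ring
  have intZ2 : Integrable (fun ω => (Z ω) ^ 2) μ := by
    simp only [hZsq]
    apply integrable_finset_sum
    intro q _
    apply integrable_finset_sum
    intro q' _
    exact (int4 hmeas h4i q.1 (s, q.2) q'.1 (s, q'.2)).const_mul _
  have EZ : ∫ ω, Z ω ∂μ = k := by
    rw [hZ, integral_finset_sum _ fun q _ => (int2 hmeas h4i q.1 (s, q.2)).const_mul _]
    rw [hk, ← S1inner u Q s]
    apply Finset.sum_congr rfl
    intro q _
    rw [integral_const_mul, Emul hmeas h4i hindep h0 h2 q.1 (s, q.2), hc]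
  have EZint : ∫ ω, (Z ω) ^ 2 ∂μ = ∑ q : (Fin T × Fin p) × Fin p, ∑ q' : (Fin T × Fin p) × Fin p,
      ((u q.1.1 * Q q.1.2 q.2) * (u q'.1.1 * Q q'.1.2 q'.2)) *
      ((((if q.1 = (s, q.2) then (1:ℝ) else 0) * (if q'.1 = (s, q'.2) then 1 else 0)
        + (if q.1 = q'.1 then 1 else 0) * (if ((s, q.2) : Fin T × Fin p) = (s, q'.2) then 1 else 0)
        + (if q.1 = (s, q'.2) then 1 else 0) * (if ((s, q.2) : Fin T × Fin p) = q'.1 then 1 else 0))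
       + (if q.1 = (s, q.2) ∧ q.1 = q'.1 ∧ q.1 = (s, q'.2) then (∫ ω, X q.1 ω ^ 4 ∂μ) - 3 else 0))) := by
    simp only [hZsq]
    rw [integral_finset_sum _ fun q _ => integrable_finset_sum _ fun q' _ =>
      (int4 hmeas h4i q.1 (s, q.2) q'.1 (s, q'.2)).const_mul _]
    apply Finset.sum_congr rfl
    intro q _
    rw [integral_finset_sum _ fun q' _ =>
      (int4 hmeas h4i q.1 (s, q.2) q'.1 (s, q'.2)).const_mul _]
    apply Finset.sum_congr rfl
    intro q' _
    rw [integral_const_mul, Equad hmeas h4i hindep h0 h2 q.1 (s, q.2) q'.1 (s, q'.2), hc]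
  have EZ2 : ∫ ω, (Z ω) ^ 2 ∂μ ≤ k ^ 2 + (1 + (M + 4) * u s ^ 2) * (∑ i, ∑ j, Q i j ^ 2) := by
    rw [EZint, hk]
    exact kappa_sum M hM0 u hu Q hQ (fun i => ∫ ω, X i ω ^ 4 ∂μ) h4bd s
  constructor
  · have : (fun ω => (Z ω - k) ^ 2) = fun ω => (Z ω) ^ 2 - (2 * k) * Z ω + k ^ 2 := by
      funext ω; ring
    rw [show (fun ω => (∑ q : (Fin T × Fin p) × Fin p,
        (u q.1.1 * Q q.1.2 q.2) * (X q.1 ω * X (s, q.2) ω) - u s * ∑ j, Q j j) ^ 2)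
        = fun ω => (Z ω - k) ^ 2 from rfl, this]
    exact (intZ2.sub (intZ.const_mul (2 * k))).add (integrable_const _)
  · have hexp : (fun ω => (Z ω - k) ^ 2) = fun ω => (Z ω) ^ 2 - (2 * k) * Z ω + k ^ 2 := by
      funext ω; ring
    have i2 : Integrable (fun ω => 2 * k * Z ω) μ := intZ.const_mul _
    have i1 : Integrable (fun ω => Z ω ^ 2 - 2 * k * Z ω) μ := intZ2.sub i2
    have hrw : ∫ ω, (Z ω - k) ^ 2 ∂μ = ∫ ω, (Z ω) ^ 2 ∂μ - k ^ 2 := by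
      rw [hexp, integral_add i1 (integrable_const _),
        integral_sub intZ2 i2, integral_const_mul, EZ, integral_const]
      simp [measure_univ]
      ring
    rw [show ∫ ω, (∑ q : (Fin T × Fin p) × Fin p,
        (u q.1.1 * Q q.1.2 q.2) * (X q.1 ω * X (s, q.2) ω) - u s * ∑ j, Q j j) ^ 2 ∂μ
        = ∫ ω, (Z ω - k) ^ 2 ∂μ from rfl, hrw]
    linarith [EZ2]
end wmom

section wprod
variable {Ω : Type} [MeasurableSpace Ω] {μ : Measure Ω} [IsProbabilityMeasure μ]
variable {T p : ℕ} {X : Fin T × Fin p → Ω → ℝ}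
variable (hmeas : ∀ i, Measurable (X i))
variable (h4i : ∀ i, Integrable (fun ω => (X i ω) ^ 4) μ)
include hmeas h4i

private lemma wprod_int (u : Fin T → ℝ) (Q : Matrix (Fin p) (Fin p) ℝ) (x y : Fin T) :
    Integrable (fun ω =>
      ((∑ q : (Fin T × Fin p) × Fin p,
          (u q.1.1 * Q q.1.2 q.2) * (X q.1 ω * X (x, q.2) ω)) - u x * ∑ j, Q j j) *
      ((∑ q : (Fin T × Fin p) × Fin p,
          (u q.1.1 * Q q.1.2 q.2) * (X q.1 ω * X (y, q.2) ω)) - u y * ∑ j, Q j j)) μ := by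
  set c : (Fin T × Fin p) × Fin p → ℝ := fun q => u q.1.1 * Q q.1.2 q.2 with hc
  set Zx : Ω → ℝ := fun ω => ∑ q : (Fin T × Fin p) × Fin p,
    c q * (X q.1 ω * X (x, q.2) ω) with hZx
  set Zy : Ω → ℝ := fun ω => ∑ q : (Fin T × Fin p) × Fin p,
    c q * (X q.1 ω * X (y, q.2) ω) with hZy
  set kx : ℝ := u x * ∑ j, Q j j with hkx
  set ky : ℝ := u y * ∑ j, Q j j with hky
  have intZx : Integrable Zx μ :=
    integrable_finset_sum _ fun q _ => (int2 hmeas h4i q.1 (x, q.2)).const_mul _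
  have intZy : Integrable Zy μ :=
    integrable_finset_sum _ fun q _ => (int2 hmeas h4i q.1 (y, q.2)).const_mul _
  have intS : Integrable (fun ω => ∑ q : (Fin T × Fin p) × Fin p,
      ∑ q' : (Fin T × Fin p) × Fin p,
      (c q * c q') * (X q.1 ω * X (x, q.2) ω * X q'.1 ω * X (y, q'.2) ω)) μ :=
    integrable_finset_sum _ fun q _ => integrable_finset_sum _ fun q' _ =>
      (int4 hmeas h4i q.1 (x, q.2) q'.1 (y, q'.2)).const_mul _
  have hpt : (fun ω => (Zx ω - kx) * (Zy ω - ky))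
      = fun ω => ((∑ q : (Fin T × Fin p) × Fin p, ∑ q' : (Fin T × Fin p) × Fin p,
        (c q * c q') * (X q.1 ω * X (x, q.2) ω * X q'.1 ω * X (y, q'.2) ω))
        - kx * Zy ω - ky * Zx ω) + kx * ky := by
    funext ω
    have hZZ : Zx ω * Zy ω = ∑ q : (Fin T × Fin p) × Fin p, ∑ q' : (Fin T × Fin p) × Fin p,
        (c q * c q') * (X q.1 ω * X (x, q.2) ω * X q'.1 ω * X (y, q'.2) ω) := by
      rw [hZx, hZy, Finset.sum_mul_sum]
      exact Finset.sum_congr rfl fun q _ => Finset.sum_congr rfl fun q' _ => by ring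
    have : (Zx ω - kx) * (Zy ω - ky)
        = (Zx ω * Zy ω - kx * Zy ω - ky * Zx ω) + kx * ky := by ring
    rw [this, hZZ]
  rw [show (fun ω =>
      ((∑ q : (Fin T × Fin p) × Fin p,
          (u q.1.1 * Q q.1.2 q.2) * (X q.1 ω * X (x, q.2) ω)) - u x * ∑ j, Q j j) *
      ((∑ q : (Fin T × Fin p) × Fin p,
          (u q.1.1 * Q q.1.2 q.2) * (X q.1 ω * X (y, q.2) ω)) - u y * ∑ j, Q j j))
      = fun ω => (Zx ω - kx) * (Zy ω - ky) from rfl, hpt]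
  exact ((intS.sub (intZy.const_mul kx)).sub (intZx.const_mul ky)).add (integrable_const _)

end wprod

private lemma ptrans {T : ℕ} (M : ℝ) (P : Matrix (Fin T) (Fin T) ℝ)
    (hP : ∀ v : Fin T → ℝ, ∑ s, ((P *ᵥ v) s) ^ 2 ≤ M ^ 2 * ∑ s, (v s) ^ 2) (w : Fin T → ℝ) :
    ∑ s, (∑ x, w x * P x s) ^ 2 ≤ M ^ 2 * ∑ s, (w s) ^ 2 := by
  have hB0 : 0 ≤ ∑ s, w s ^ 2 := Finset.sum_nonneg fun s _ => sq_nonneg _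
  have hA0 : 0 ≤ ∑ s, (∑ x, w x * P x s) ^ 2 := Finset.sum_nonneg fun s _ => sq_nonneg _
  set v : Fin T → ℝ := fun s => ∑ x, w x * P x s with hv
  have key : ∑ s, v s ^ 2 = ∑ x, w x * ((P *ᵥ v) x) := by
    have e1 : ∀ s, v s ^ 2 = ∑ x, w x * P x s * v s := by
      intro s
      rw [sq]
      conv_lhs => rw [hv]
      rw [Finset.sum_mul]
    simp only [e1]
    rw [Finset.sum_comm]
    apply Finset.sum_congr rfl
    intro x _
    simp only [Matrix.mulVec, dotProduct]
    rw [Finset.mul_sum]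
    exact Finset.sum_congr rfl fun s _ => by ring
  have cauchy := Finset.sum_mul_sq_le_sq_mul_sq Finset.univ w (fun x => (P *ᵥ v) x)
  have hPv := hP v
  rcases eq_or_lt_of_le hA0 with h | h
  · rw [← h]; positivity
  · have h1 : (∑ s, v s ^ 2) ^ 2 ≤ (∑ s, w s ^ 2) * (M ^ 2 * ∑ s, v s ^ 2) := by
      calc (∑ s, v s ^ 2) ^ 2 = (∑ x, w x * ((P *ᵥ v) x)) ^ 2 := by rw [key]
        _ ≤ (∑ x, w x ^ 2) * (∑ x, ((P *ᵥ v) x) ^ 2) := cauchy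
        _ ≤ (∑ s, w s ^ 2) * (M ^ 2 * ∑ s, v s ^ 2) :=
            mul_le_mul_of_nonneg_left hPv hB0
    have hAv : ∑ s, (∑ x, w x * P x s) ^ 2 = ∑ s, v s ^ 2 := rfl
    rw [hAv] at h ⊢
    nlinarith [h, h1]



private lemma zs_eq {T p : ℕ} (u : Fin T → ℝ) (Q : Matrix (Fin p) (Fin p) ℝ)
    (E : Matrix (Fin T) (Fin p) ℝ) (s : Fin T) :
    ((u ᵥ* E) ᵥ* Q ᵥ* Eᵀ) s = ∑ q : (Fin T × Fin p) × Fin p,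
      (u q.1.1 * Q q.1.2 q.2) * (E q.1.1 q.1.2 * E s q.2) := by
  simp only [Matrix.vecMul, dotProduct, Matrix.transpose_apply, Finset.sum_mul]
  rw [Fintype.sum_prod_type, Fintype.sum_prod_type]
  rw [Finset.sum_comm]
  rw [Finset.sum_congr rfl (fun (j : Fin p) (_ : j ∈ Finset.univ) =>
    (Finset.sum_comm (s := Finset.univ (α := Fin p)) (t := Finset.univ (α := Fin T))
      (f := fun l t => u t * E t j * Q j l * E s l)))]
  rw [Finset.sum_comm]
  apply Finset.sum_congr rfl; intro t _
  apply Finset.sum_congr rfl; intro j _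
  apply Finset.sum_congr rfl; intro l _
  ring

private lemma goal_conv {T p r : ℕ} (u : Fin T → ℝ) (Q : Matrix (Fin p) (Fin p) ℝ)
    (P : Matrix (Fin T) (Fin T) ℝ) (E : Matrix (Fin T) (Fin p) ℝ)
    (G : Matrix (Fin T) (Fin r) ℝ) (k : Fin r) :
    ((u ᵥ* E) ᵥ* Q ᵥ* Eᵀ ᵥ* P ᵥ* G) k - Matrix.trace Q * (((u ᵥ* P) ᵥ* G) k)
    = ∑ t, (∑ s, ((∑ q : (Fin T × Fin p) × Fin p,
        (u q.1.1 * Q q.1.2 q.2) * (E q.1.1 q.1.2 * E s q.2)) - u s * ∑ j, Q j j) * P s t)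
        * G t k := by
  have htr : Matrix.trace Q = ∑ j, Q j j := by simp [Matrix.trace, Matrix.diag]
  have h1 : ∀ t, (((u ᵥ* E) ᵥ* Q ᵥ* Eᵀ) ᵥ* P) t - Matrix.trace Q * ((u ᵥ* P) t)
      = ∑ s, ((∑ q : (Fin T × Fin p) × Fin p,
        (u q.1.1 * Q q.1.2 q.2) * (E q.1.1 q.1.2 * E s q.2)) - u s * ∑ j, Q j j) * P s t := by
    intro t
    simp only [Matrix.vecMul, dotProduct, htr, Finset.mul_sum, sub_mul,
      Finset.sum_sub_distrib]
    congr 1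
    · apply Finset.sum_congr rfl; intro x _
      rw [← zs_eq u Q E x]
      rfl
    · apply Finset.sum_congr rfl; intro x _
      rw [← Finset.mul_sum]; ring
  calc ((u ᵥ* E) ᵥ* Q ᵥ* Eᵀ ᵥ* P ᵥ* G) k - Matrix.trace Q * (((u ᵥ* P) ᵥ* G) k)
      = ∑ t, ((((u ᵥ* E) ᵥ* Q ᵥ* Eᵀ) ᵥ* P) t - Matrix.trace Q * ((u ᵥ* P) t)) * G t k := by
        rw [show ((u ᵥ* E ᵥ* Q ᵥ* Eᵀ ᵥ* P) ᵥ* G) k = ∑ t, (u ᵥ* E ᵥ* Q ᵥ* Eᵀ ᵥ* P) t * G t k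
            from by simp [Matrix.vecMul, dotProduct],
          show ((u ᵥ* P) ᵥ* G) k = ∑ t, (u ᵥ* P) t * G t k
            from by simp [Matrix.vecMul, dotProduct],
          Finset.mul_sum, ← Finset.sum_sub_distrib]
        exact Finset.sum_congr rfl fun t _ => by ring
    _ = _ := by
        apply Finset.sum_congr rfl; intro t _
        rw [h1 t]

private lemma sq_expand {T r : ℕ} (v : Fin T → ℝ) (G : Matrix (Fin T) (Fin r) ℝ) :
    ∑ k, (∑ t, v t * G t k) ^ 2 = ∑ x, ∑ y, (v x * v y) * (∑ k, G x k * G y k) := by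
  have h1 : ∀ k, (∑ t, v t * G t k) ^ 2 = ∑ x, ∑ y, (v x * v y) * (G x k * G y k) := by
    intro k
    rw [sq, Finset.sum_mul_sum]
    exact Finset.sum_congr rfl fun x _ => Finset.sum_congr rfl fun y _ => by ring
  simp only [h1]
  rw [Finset.sum_comm]
  apply Finset.sum_congr rfl; intro x _
  rw [Finset.sum_comm]
  apply Finset.sum_congr rfl; intro y _
  rw [Finset.mul_sum]

/-- Let `M > 0`. There is a constant `C` depending only on `M` such that: for every `T×p`
random matrix `𝓔` with mutually independent mean-0, variance-1 entries with fourth moments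
bounded by `M`, every random `T×r` matrix `F` independent of `𝓔` with `E[‖vᵀF‖²] ≤ M‖v‖²`
for all `v`, every symmetric `p×p` matrix `Q`, every deterministic `T×T` matrix `P` with
operator norm at most `M`, and every unit vector `u ∈ ℝ^T`,
`E[‖uᵀ𝓔Q𝓔ᵀPF − tr(Q)·uᵀPF‖²] ≤ C·T·‖Q‖_F²`. -/
theorem uniform_quadratic_form_bound (M : ℝ) (hM : 0 < M) :
    ∃ C : ℝ, ∀ (T p r : ℕ), 0 < T → 0 < p → 0 < r →
      ∀ (Ω : Type) [MeasurableSpace Ω] (μ : Measure Ω), IsProbabilityMeasure μ →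
      ∀ (𝓔 : Ω → Fin T → Fin p → ℝ), Measurable 𝓔 →
      iIndepFun
        (fun tj : Fin T × Fin p => fun ω => 𝓔 ω tj.1 tj.2) μ →
      (∀ t j, ∫ ω, 𝓔 ω t j ∂μ = 0) →
      (∀ t j, ∫ ω, (𝓔 ω t j) ^ 2 ∂μ = 1) →
      (∀ t j, Integrable (fun ω => (𝓔 ω t j) ^ 4) μ) →
      (∀ t j, ∫ ω, (𝓔 ω t j) ^ 4 ∂μ ≤ M) →
      ∀ (F : Ω → Fin T → Fin r → ℝ), Measurable F →
      IndepFun 𝓔 F μ →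
      (∀ v : Fin T → ℝ, Integrable (fun ω => ∑ k, ((v ᵥ* Matrix.of (F ω)) k) ^ 2) μ) →
      (∀ v : Fin T → ℝ,
        ∫ ω, ∑ k, ((v ᵥ* Matrix.of (F ω)) k) ^ 2 ∂μ ≤ M * ∑ s, (v s) ^ 2) →
      ∀ (Q : Matrix (Fin p) (Fin p) ℝ), Qᵀ = Q →
      ∀ (P : Matrix (Fin T) (Fin T) ℝ),
      (∀ v : Fin T → ℝ, ∑ s, ((P *ᵥ v) s) ^ 2 ≤ M ^ 2 * ∑ s, (v s) ^ 2) →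
      ∀ (u : Fin T → ℝ), (∑ s, (u s) ^ 2) = 1 →
      ∫ ω, ∑ k,
          (((((u ᵥ* Matrix.of (𝓔 ω)) ᵥ* Q) ᵥ* (Matrix.of (𝓔 ω))ᵀ ᵥ* P ᵥ* Matrix.of (F ω)) k
            - Matrix.trace Q * (((u ᵥ* P) ᵥ* Matrix.of (F ω)) k)) ^ 2) ∂μ
        ≤ C * T * ∑ i, ∑ j, (Q i j) ^ 2 := by
  classical
  refine ⟨M ^ 3 * (M + 5), ?_⟩
  intro T p r hT hp hr Ω mΩ μ hprob 𝓔 h𝓔m hindep h0 h2 h4i h4bd F hFm hEF hIntF hFbd Q hQ P hP u hu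
  haveI : IsProbabilityMeasure μ := hprob
  have hM0 : (0:ℝ) ≤ M := hM.le
  set X : Fin T × Fin p → Ω → ℝ := fun tj => fun ω => 𝓔 ω tj.1 tj.2 with hXdef
  have hmeasX : ∀ i, Measurable (X i) := fun i =>
    (measurable_pi_apply i.2).comp ((measurable_pi_apply i.1).comp h𝓔m)
  have hindepX : iIndepFun X μ := hindep
  have h0X : ∀ i, ∫ ω, X i ω ∂μ = 0 := fun i => h0 i.1 i.2
  have h2X : ∀ i, ∫ ω, (X i ω) ^ 2 ∂μ = 1 := fun i => h2 i.1 i.2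
  have h4iX : ∀ i, Integrable (fun ω => (X i ω) ^ 4) μ := fun i => h4i i.1 i.2
  have h4bdX : ∀ i, ∫ ω, (X i ω) ^ 4 ∂μ ≤ M := fun i => h4bd i.1 i.2
  set w : Fin T → Ω → ℝ := fun s ω => (∑ q : (Fin T × Fin p) × Fin p,
    (u q.1.1 * Q q.1.2 q.2) * (X q.1 ω * X (s, q.2) ω)) - u s * ∑ j, Q j j with hwdef
  set a : Fin T → Ω → ℝ := fun t ω => ∑ s, w s ω * P s t with hadef
  set H : Fin T → Fin T → Ω → ℝ := fun x y ω => ∑ k, F ω x k * F ω y k with hHdef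
  set G : Fin T → Fin T → ℝ := fun x y => ∫ ω, H x y ω ∂μ with hGdef
  set SQ : ℝ := ∑ i, ∑ j, (Q i j) ^ 2 with hSQdef
  have hSQ0 : 0 ≤ SQ := Finset.sum_nonneg fun i _ => Finset.sum_nonneg fun j _ => sq_nonneg _
  -- integrability of w products
  have wprod : ∀ x y, Integrable (fun ω => w x ω * w y ω) μ := fun x y =>
    wprod_int hmeasX h4iX u Q x y
  have intw2 : ∀ s, Integrable (fun ω => (w s ω) ^ 2) μ := fun s =>
    (w_moment hmeasX h4iX hindepX h0X h2X M hM0 h4bdX u hu Q hQ s).1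
  have hw2bd : ∀ s, ∫ ω, (w s ω) ^ 2 ∂μ ≤ (1 + (M + 4) * u s ^ 2) * SQ := fun s =>
    (w_moment hmeasX h4iX hindepX h0X h2X M hM0 h4bdX u hu Q hQ s).2
  -- F measurability
  have hFmeas : ∀ x k, Measurable (fun ω => F ω x k) := fun x k =>
    (measurable_pi_apply k).comp ((measurable_pi_apply x).comp hFm)
  have hHmeas : ∀ x y, Measurable (H x y) := fun x y =>
    Finset.measurable_sum _ fun k _ => (hFmeas x k).mul (hFmeas y k)
  have hsingle : ∀ (x : Fin T) (ω : Ω) (k : Fin r),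
      (Pi.single x (1:ℝ) ᵥ* Matrix.of (F ω)) k = F ω x k := by
    intro x ω k
    simp [Matrix.vecMul, dotProduct, Pi.single_apply]
  have hIntHd : ∀ x, Integrable (H x x) μ := by
    intro x
    refine (hIntF (Pi.single x 1)).congr (ae_of_all _ fun ω => ?_)
    show ∑ k, ((Pi.single x 1 ᵥ* Matrix.of (F ω)) k) ^ 2 = H x x ω
    refine Finset.sum_congr rfl fun k _ => ?_
    rw [hsingle x ω k]; ring
  have hIntH : ∀ x y, Integrable (H x y) μ := by
    intro x y
    refine Integrable.mono' (((hIntHd x).add (hIntHd y)).div_const 2)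
      (hHmeas x y).aestronglyMeasurable (ae_of_all _ fun ω => ?_)
    have habs : ∀ b c : ℝ, |b * c| ≤ (b ^ 2 + c ^ 2) / 2 := by
      intro b c
      rw [abs_le]; constructor <;> nlinarith [sq_nonneg (b + c), sq_nonneg (b - c)]
    calc ‖H x y ω‖ = |∑ k, F ω x k * F ω y k| := rfl
      _ ≤ ∑ k, |F ω x k * F ω y k| := Finset.abs_sum_le_sum_abs _ _
      _ ≤ ∑ k, ((F ω x k) ^ 2 + (F ω y k) ^ 2) / 2 :=
          Finset.sum_le_sum fun k _ => habs _ _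
      _ = (H x x ω + H y y ω) / 2 := by
          rw [← Finset.sum_div, Finset.sum_add_distrib]
          congr 1
          · congr 1
            · exact Finset.sum_congr rfl fun k _ => by rw [sq]
            · exact Finset.sum_congr rfl fun k _ => by rw [sq]
  -- step A : deterministic quadratic form bound for G
  have stepA : ∀ v : Fin T → ℝ, ∑ x, ∑ y, (v x * v y) * G x y ≤ M * ∑ s, (v s) ^ 2 := by
    intro v
    have h1 : ∑ x, ∑ y, (v x * v y) * G x y = ∫ ω, ∑ x, ∑ y, (v x * v y) * H x y ω ∂μ := by
      rw [integral_finset_sum _ fun x _ =>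
        integrable_finset_sum _ fun y _ => (hIntH x y).const_mul _]
      refine Finset.sum_congr rfl fun x _ => ?_
      rw [integral_finset_sum _ fun y _ => (hIntH x y).const_mul _]
      exact Finset.sum_congr rfl fun y _ => (integral_const_mul _ _).symm
    have h2' : ∀ ω, ∑ x, ∑ y, (v x * v y) * H x y ω
        = ∑ k, ((v ᵥ* Matrix.of (F ω)) k) ^ 2 := by
      intro ω
      have hse := sq_expand v (Matrix.of (F ω))
      simp only [Matrix.of_apply] at hse
      show ∑ x, ∑ y, (v x * v y) * (∑ k, F ω x k * F ω y k)
        = ∑ k, ((v ᵥ* Matrix.of (F ω)) k) ^ 2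
      rw [← hse]
      refine Finset.sum_congr rfl fun k _ => ?_
      rw [show (v ᵥ* Matrix.of (F ω)) k = ∑ t, v t * F ω t k from by
        simp [Matrix.vecMul, dotProduct]]
    rw [h1]
    calc ∫ ω, ∑ x, ∑ y, (v x * v y) * H x y ω ∂μ
        = ∫ ω, ∑ k, ((v ᵥ* Matrix.of (F ω)) k) ^ 2 ∂μ := by simp only [h2']
      _ ≤ M * ∑ s, (v s) ^ 2 := hFbd v
  -- independence of a-products and H
  set A : Fin T → (Fin T → Fin p → ℝ) → ℝ := fun t e => ∑ s,
    ((∑ q : (Fin T × Fin p) × Fin p,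
      (u q.1.1 * Q q.1.2 q.2) * (e q.1.1 q.1.2 * e s q.2)) - u s * ∑ j, Q j j) * P s t
    with hAdef
  have meval : ∀ (i : Fin T) (j : Fin p), Measurable (fun e : Fin T → Fin p → ℝ => e i j) :=
    fun i j => (measurable_pi_apply j).comp (measurable_pi_apply i)
  have hAmeas : ∀ t, Measurable (A t) := by
    intro t
    apply Finset.measurable_sum
    intro s _
    apply Measurable.mul_const
    apply Measurable.sub _ measurable_const
    apply Finset.measurable_sum
    intro q _
    exact ((meval q.1.1 q.1.2).mul (meval s q.2)).const_mul _
  have hΨmeas : ∀ x y : Fin T, Measurable (fun f : Fin T → Fin r → ℝ => ∑ k, f x k * f y k) := by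
    intro x y
    apply Finset.measurable_sum
    intro k _
    exact ((measurable_pi_apply k).comp (measurable_pi_apply x)).mul
      ((measurable_pi_apply k).comp (measurable_pi_apply y : Measurable fun f : Fin T → Fin r → ℝ => f y))
  have hindaH : ∀ x y, IndepFun (fun ω => a x ω * a y ω) (H x y) μ := by
    intro x y
    exact hEF.comp (((hAmeas x).mul (hAmeas y)) :
      Measurable fun e => A x e * A y e) (hΨmeas x y)
  -- integrability of a-products
  have intaa : ∀ x y, Integrable (fun ω => a x ω * a y ω) μ := by
    intro x y
    have hpt : (fun ω => a x ω * a y ω)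
        = fun ω => ∑ s, ∑ t, (P s x * P t y) * (w s ω * w t ω) := by
      funext ω
      show (∑ s, w s ω * P s x) * (∑ t, w t ω * P t y) = _
      rw [Finset.sum_mul_sum]
      exact Finset.sum_congr rfl fun s _ => Finset.sum_congr rfl fun t _ => by ring
    rw [hpt]
    exact integrable_finset_sum _ fun s _ => integrable_finset_sum _ fun t _ =>
      (wprod s t).const_mul _
  have intaH : ∀ x y, Integrable (fun ω => (a x ω * a y ω) * H x y ω) μ := fun x y =>
    (hindaH x y).integrable_mul (intaa x y) (hIntH x y)
  -- rewrite the goal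
  have hgoal : ∀ ω, (∑ k,
      (((((u ᵥ* Matrix.of (𝓔 ω)) ᵥ* Q) ᵥ* (Matrix.of (𝓔 ω))ᵀ ᵥ* P ᵥ* Matrix.of (F ω)) k
        - Matrix.trace Q * (((u ᵥ* P) ᵥ* Matrix.of (F ω)) k)) ^ 2))
      = ∑ x, ∑ y, (a x ω * a y ω) * H x y ω := by
    intro ω
    calc (∑ k,
        (((((u ᵥ* Matrix.of (𝓔 ω)) ᵥ* Q) ᵥ* (Matrix.of (𝓔 ω))ᵀ ᵥ* P ᵥ* Matrix.of (F ω)) k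
          - Matrix.trace Q * (((u ᵥ* P) ᵥ* Matrix.of (F ω)) k)) ^ 2))
        = ∑ k, (∑ t, a t ω * Matrix.of (F ω) t k) ^ 2 := by
          refine Finset.sum_congr rfl fun k _ => ?_
          rw [goal_conv u Q P (Matrix.of (𝓔 ω)) (Matrix.of (F ω)) k]
          rfl
      _ = ∑ x, ∑ y, ((a x ω) * (a y ω)) *
            (∑ k, Matrix.of (F ω) x k * Matrix.of (F ω) y k) :=
          sq_expand (fun t => a t ω) (Matrix.of (F ω))
      _ = ∑ x, ∑ y, (a x ω * a y ω) * H x y ω := rfl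
  simp only [hgoal]
  -- main chain
  have key1 : ∫ ω, ∑ x, ∑ y, (a x ω * a y ω) * H x y ω ∂μ
      = ∑ x, ∑ y, (∫ ω, a x ω * a y ω ∂μ) * G x y := by
    rw [integral_finset_sum _ fun x _ => integrable_finset_sum _ fun y _ => intaH x y]
    refine Finset.sum_congr rfl fun x _ => ?_
    rw [integral_finset_sum _ fun y _ => intaH x y]
    refine Finset.sum_congr rfl fun y _ => ?_
    exact (hindaH x y).integral_fun_mul_eq_mul_integral (intaa x y).aestronglyMeasurable (hIntH x y).aestronglyMeasurable
  have key2 : ∑ x, ∑ y, (∫ ω, a x ω * a y ω ∂μ) * G x y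
      = ∫ ω, ∑ x, ∑ y, (a x ω * a y ω) * G x y ∂μ := by
    rw [integral_finset_sum _ fun x _ =>
      integrable_finset_sum _ fun y _ => (intaa x y).mul_const _]
    refine Finset.sum_congr rfl fun x _ => ?_
    rw [integral_finset_sum _ fun y _ => (intaa x y).mul_const _]
    exact Finset.sum_congr rfl fun y _ => (integral_mul_const _ _).symm
  have inta2 : ∀ s, Integrable (fun ω => (a s ω) ^ 2) μ := fun s =>
    (intaa s s).congr (ae_of_all _ fun ω => (pow_two (a s ω)).symm)
  have key3 : ∫ ω, ∑ x, ∑ y, (a x ω * a y ω) * G x y ∂μ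
      ≤ ∫ ω, M * ∑ s, (a s ω) ^ 2 ∂μ := by
    refine integral_mono
      (integrable_finset_sum _ fun x _ =>
        integrable_finset_sum _ fun y _ => (intaa x y).mul_const _)
      ((integrable_finset_sum _ fun s _ => inta2 s).const_mul _)
      fun ω => ?_
    exact stepA (fun t => a t ω)
  have key4 : ∫ ω, M * ∑ s, (a s ω) ^ 2 ∂μ
      ≤ ∫ ω, M * (M ^ 2 * ∑ s, (w s ω) ^ 2) ∂μ := by
    refine integral_mono
      ((integrable_finset_sum _ fun s _ => inta2 s).const_mul _)
      (((integrable_finset_sum _ fun s _ => intw2 s).const_mul _).const_mul _)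
      fun ω => ?_
    exact mul_le_mul_of_nonneg_left (ptrans M P hP (fun s => w s ω)) hM0
  have key5 : ∫ ω, M * (M ^ 2 * ∑ s, (w s ω) ^ 2) ∂μ
      = M ^ 3 * ∑ s, ∫ ω, (w s ω) ^ 2 ∂μ := by
    rw [integral_const_mul, integral_const_mul, integral_finset_sum _ fun s _ => intw2 s]
    ring
  have key6 : ∑ s, ∫ ω, (w s ω) ^ 2 ∂μ ≤ ((T : ℝ) + (M + 4)) * SQ := by
    calc ∑ s, ∫ ω, (w s ω) ^ 2 ∂μ ≤ ∑ s, (1 + (M + 4) * u s ^ 2) * SQ :=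
        Finset.sum_le_sum fun s _ => hw2bd s
      _ = ((T : ℝ) + (M + 4)) * SQ := by
          rw [← Finset.sum_mul]
          congr 1
          rw [Finset.sum_add_distrib, Finset.sum_const, ← Finset.mul_sum, hu,
            Finset.card_univ, Fintype.card_fin]
          simp
  have hT1 : (1:ℝ) ≤ (T:ℝ) := by exact_mod_cast hT
  calc ∫ ω, ∑ x, ∑ y, (a x ω * a y ω) * H x y ω ∂μ
      = ∑ x, ∑ y, (∫ ω, a x ω * a y ω ∂μ) * G x y := key1
    _ = ∫ ω, ∑ x, ∑ y, (a x ω * a y ω) * G x y ∂μ := key2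
    _ ≤ ∫ ω, M * ∑ s, (a s ω) ^ 2 ∂μ := key3
    _ ≤ ∫ ω, M * (M ^ 2 * ∑ s, (w s ω) ^ 2) ∂μ := key4
    _ = M ^ 3 * ∑ s, ∫ ω, (w s ω) ^ 2 ∂μ := key5
    _ ≤ M ^ 3 * (((T : ℝ) + (M + 4)) * SQ) :=
        mul_le_mul_of_nonneg_left key6 (by positivity)
    _ ≤ M ^ 3 * (M + 5) * (T : ℝ) * SQ := by
        nlinarith [hSQ0, hM0, hT1, pow_nonneg hM0 3,
          mul_nonneg (mul_nonneg (pow_nonneg hM0 3) hSQ0)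
            (mul_nonneg (by linarith : (0:ℝ) ≤ M + 4) (by linarith : (0:ℝ) ≤ (T:ℝ) - 1))]
end
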